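/- arXiv:1507.02384 — 2 statements merged into one kernel-verified Lean document; each statement's English description precedes it below -/
import Mathlib

section
/- Let G be a finite simple bipartite graph with bipartition (A,B), let M be a maximum matching of G, and let C be a minimum vertex cover of G. Then C equals the A-König cover of G constructed from M if and only if every minimum vertex cover C' of G satisfies A ∩ C' ⊆ A ∩ C and B ∩ C ⊆ B ∩ C'. -/
open SimpleGraph

/-- A vertex cover of a graph: a set of vertices containing at least one endpoint
of every edge. -/
def IsVertexCover {V : Type} (G : SimpleGraph V) (C : Set V) : Prop :=
  ∀ ⦃u v : V⦄, G.Adj u v → u ∈ C ∨ v ∈ C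

/-- A minimum vertex cover: a vertex cover of smallest cardinality. -/
def IsMinVertexCover {V : Type} (G : SimpleGraph V) (C : Set V) : Prop :=
  _root_.IsVertexCover G C ∧ ∀ C' : Set V, _root_.IsVertexCover G C' → C.ncard ≤ C'.ncard

/-- `(A, B)` is a bipartition of `G`: `A` and `B` are disjoint, cover all vertices,
and every edge joins a vertex of `A` to a vertex of `B`. -/
def IsBipartition {V : Type} (G : SimpleGraph V) (A B : Set V) : Prop :=
  Disjoint A B ∧ A ∪ B = Set.univ ∧
    ∀ ⦃u v : V⦄, G.Adj u v → (u ∈ A ∧ v ∈ B) ∨ (u ∈ B ∧ v ∈ A)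

/-- A matching of `G`: a set of edges of `G` that are pairwise vertex-disjoint. -/
def IsMatching' {V : Type} (G : SimpleGraph V) (M : Set (Sym2 V)) : Prop :=
  M ⊆ G.edgeSet ∧ ∀ e ∈ M, ∀ f ∈ M, e ≠ f → ∀ v : V, ¬ (v ∈ e ∧ v ∈ f)

/-- A maximum matching: a matching of largest cardinality. -/
def IsMaxMatching {V : Type} (G : SimpleGraph V) (M : Set (Sym2 V)) : Prop :=
  IsMatching' G M ∧ ∀ M' : Set (Sym2 V), IsMatching' G M' → M'.ncard ≤ M.ncard

/-- A vertex is `M`-saturated if it is an endpoint of some edge of `M`. -/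
def MSaturated {V : Type} (M : Set (Sym2 V)) (v : V) : Prop :=
  ∃ e ∈ M, v ∈ e

/-- A list of edges is `M`-alternating if consecutive edges alternate between
membership and non-membership in `M`. -/
def AlternatingEdges {V : Type} (M : Set (Sym2 V)) (l : List (Sym2 V)) : Prop :=
  List.IsChain (fun e f => (e ∈ M ↔ f ∉ M)) l

/-- The edge `e` lies on an `M`-alternating path starting at an `M`-unsaturated
vertex of `A`. -/
def OnAltPath {V : Type} (G : SimpleGraph V) (M : Set (Sym2 V)) (A : Set V)
    (e : Sym2 V) : Prop :=
  ∃ (a z : V) (p : G.Walk a z), a ∈ A ∧ ¬ MSaturated M a ∧ p.IsPath ∧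
    AlternatingEdges M p.edges ∧ e ∈ p.edges

/-- The `A`-König cover of `G` constructed from a maximum matching `M`: for each
edge `ab ∈ M` with `a ∈ A` and `b ∈ B`, put `b` into the cover if `ab` lies on an
`M`-alternating path starting at an `M`-unsaturated vertex of `A`, and otherwise
put `a` into the cover. -/
def koenigCoverFrom {V : Type} (G : SimpleGraph V) (M : Set (Sym2 V))
    (A B : Set V) : Set V :=
  {b | b ∈ B ∧ ∃ e ∈ M, b ∈ e ∧ OnAltPath G M A e} ∪
    {a | a ∈ A ∧ ∃ e ∈ M, a ∈ e ∧ ¬ OnAltPath G M A e}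

/-- `C` is the `A`-König cover of the bipartite graph `G` with bipartition `(A,B)`:
the unique minimum vertex cover such that every minimum vertex cover `C'`
satisfies `A ∩ C' ⊆ A ∩ C` and `B ∩ C ⊆ B ∩ C'`. -/
def IsKoenigCover {V : Type} (G : SimpleGraph V) (A B : Set V) (C : Set V) : Prop :=
  IsMinVertexCover G C ∧
    ∀ C' : Set V, IsMinVertexCover G C' → A ∩ C' ⊆ A ∩ C ∧ B ∩ C ⊆ B ∩ C'

/-- `G[S,T]`: the bipartite graph on the vertices of `G` whose edges are exactly
the edges of `G` with one endpoint in `S` and the other in `T`. -/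
def crossingGraph {V : Type} (G : SimpleGraph V) (S T : Set V) : SimpleGraph V where
  Adj u v := G.Adj u v ∧ ((u ∈ S ∧ v ∈ T) ∨ (u ∈ T ∧ v ∈ S))
  symm := ⟨fun u v h =>
    ⟨h.1.symm, h.2.elim (fun h' => Or.inr ⟨h'.2, h'.1⟩) (fun h' => Or.inl ⟨h'.2, h'.1⟩)⟩⟩
  loopless := ⟨fun u h => G.irrefl h.1⟩

section KoenigHelpers

open SimpleGraph Walk

variable {V : Type} {G : SimpleGraph V} {M : Set (Sym2 V)} {A B : Set V}

lemma matching_eq (hM : IsMatching' G M) {e f : Sym2 V} (he : e ∈ M) (hf : f ∈ M)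
    {v : V} (hv : v ∈ e) (hv' : v ∈ f) : e = f := by
  by_contra h; exact hM.2 e he f hf h v ⟨hv, hv'⟩

lemma head_mem_of_edges_head? {x z : V} (p : G.Walk x z) {f : Sym2 V}
    (h : p.edges.head? = some f) : x ∈ f := by
  cases p with
  | nil => simp at h
  | cons h' p' =>
    simp only [Walk.edges_cons, List.head?_cons, Option.some.injEq] at h
    subst h; exact Sym2.mem_mk_left _ _

lemma end_mem_of_edges_getLast? {x z : V} (p : G.Walk x z) {f : Sym2 V}
    (h : p.edges.getLast? = some f) : z ∈ f := by
  induction p with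
  | nil => simp at h
  | cons h' p' ih =>
    cases p' with
    | nil =>
      simp only [Walk.edges_cons, Walk.edges_nil, List.getLast?_singleton,
        Option.some.injEq] at h
      subst h; exact Sym2.mem_mk_right _ _
    | cons h'' p'' =>
      rw [Walk.edges_cons, Walk.edges_cons, List.getLast?_cons_cons,
        ← Walk.edges_cons h''] at h
      exact ih h

lemma mem_support_cases {x z : V} (p : G.Walk x z) {v : V} (hv : v ∈ p.support) :
    v = x ∨ ∃ d ∈ p.darts, d.snd = v := by
  induction p with
  | nil => simp at hv; exact Or.inl hv
  | cons h' p' ih =>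
    rw [Walk.support_cons, List.mem_cons] at hv
    rcases hv with rfl | hv
    · exact Or.inl rfl
    · rcases ih hv with rfl | ⟨d, hd, hds⟩
      · exact Or.inr ⟨⟨(_, _), h'⟩, by simp [Walk.darts_cons], rfl⟩
      · exact Or.inr ⟨d, by simp [Walk.darts_cons, hd], hds⟩

end KoenigHelpers

section KoenigHelpers2

open SimpleGraph Walk

variable {V : Type} {G : SimpleGraph V} {M : Set (Sym2 V)} {A B : Set V}

lemma mem_support_of_mem_edges' {x z : V} (p : G.Walk x z) {f : Sym2 V} {v : V}
    (hf : f ∈ p.edges) (hv : v ∈ f) : v ∈ p.support := by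
  obtain ⟨w, rfl⟩ := Sym2.mem_iff_exists.mp hv
  exact p.fst_mem_support_of_mem_edges hf

lemma next_dart {x z : V} (p : G.Walk x z) (halt : AlternatingEdges M p.edges)
    {d : G.Dart} (hd : d ∈ p.darts) :
    (d.snd = z ∧ p.edges.getLast? = some d.edge) ∨
      ∃ d' ∈ p.darts, d'.fst = d.snd ∧ (d.edge ∈ M ↔ d'.edge ∉ M) := by
  induction p with
  | nil => simp at hd
  | @cons x x1 z h' p' ih =>
    rw [Walk.darts_cons, List.mem_cons] at hd
    rcases hd with rfl | hd
    · cases p' with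
      | nil =>
        left
        exact ⟨rfl, by simp [Walk.edges_cons, Walk.edges_nil]⟩
      | @cons _ x2 _ h'' p'' =>
        right
        refine ⟨⟨(x1, x2), h''⟩, by simp [Walk.darts_cons], rfl, ?_⟩
        rw [Walk.edges_cons, Walk.edges_cons] at halt
        exact (List.isChain_cons_cons.mp halt).1
    · have halt' : AlternatingEdges M p'.edges := by
        rw [Walk.edges_cons] at halt; exact halt.tail
      rcases ih halt' hd with ⟨h1, h2⟩ | ⟨d', hd', h1, h2⟩
      · left
        refine ⟨h1, ?_⟩
        have hne : p'.edges ≠ [] := by intro h; rw [h] at h2; simp at h2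
        obtain ⟨c, t, hct⟩ := List.exists_cons_of_ne_nil hne
        rw [Walk.edges_cons, hct, List.getLast?_cons_cons, ← hct, h2]
      · exact Or.inr ⟨d', by simp [Walk.darts_cons, hd'], h1, h2⟩

lemma exists_prefix_walk {x z : V} (p : G.Walk x z) {d : G.Dart} (hd : d ∈ p.darts) :
    ∃ (q : G.Walk x d.snd) (t : List (Sym2 V)),
      q.edges ++ t = p.edges ∧ q.edges.getLast? = some d.edge ∧
      q.support.IsPrefix p.support := by
  induction p with
  | nil => simp at hd
  | cons h' p' ih =>
    rw [Walk.darts_cons, List.mem_cons] at hd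
    rcases hd with rfl | hd
    · refine ⟨Walk.cons h' Walk.nil, p'.edges, by simp, by simp, ?_⟩
      refine ⟨p'.support.tail, ?_⟩
      simp only [Walk.support_cons, Walk.support_nil]
      rw [p'.support_eq_cons]
      simp
    · obtain ⟨q, t, hqt, hql, hqs⟩ := ih hd
      have hne : q.edges ≠ [] := by intro h; rw [h] at hql; simp at hql
      obtain ⟨c, t', hct⟩ := List.exists_cons_of_ne_nil hne
      refine ⟨Walk.cons h' q, t, by simp [hqt], ?_, ?_⟩
      · rw [Walk.edges_cons, hct, List.getLast?_cons_cons, ← hct, hql]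
      · obtain ⟨r, hr⟩ := hqs
        exact ⟨r, by simp only [Walk.support_cons, List.cons_append, hr]⟩

lemma dart_direction (hbip : IsBipartition G A B) :
    ∀ {x z : V} (p : G.Walk x z), AlternatingEdges M p.edges →
    ((x ∈ A ∧ ∀ f ∈ p.edges.head?, f ∉ M) ∨ (x ∈ B ∧ ∀ f ∈ p.edges.head?, f ∈ M)) →
    ∀ d ∈ p.darts, (d.edge ∈ M → d.fst ∈ B ∧ d.snd ∈ A) ∧
      (d.edge ∉ M → d.fst ∈ A ∧ d.snd ∈ B) := by
  intro x z p
  induction p with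
  | nil => intro _ _ d hd; simp at hd
  | @cons x x1 z h' p' ih =>
    intro halt hstart d hd
    have hx1 : (x ∈ A ∧ x1 ∈ B) ∨ (x ∈ B ∧ x1 ∈ A) := hbip.2.2 h'
    have hdisj : ∀ v, v ∈ A → v ∈ B → False := fun v hv hv' =>
      Set.disjoint_left.mp hbip.1 hv hv'
    rw [Walk.edges_cons] at halt
    have htail : AlternatingEdges M p'.edges := halt.tail
    have hrel : ∀ f ∈ p'.edges.head?, (s(x, x1) ∈ M ↔ f ∉ M) :=
      (List.isChain_cons.mp halt).1
    rw [Walk.darts_cons, List.mem_cons] at hd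
    rcases hstart with ⟨hxA, hhead⟩ | ⟨hxB, hhead⟩
    · have he0 : s(x, x1) ∉ M := hhead _ (by rw [Walk.edges_cons]; rfl)
      have hx1B : x1 ∈ B := by
        rcases hx1 with ⟨_, h⟩ | ⟨h, _⟩
        · exact h
        · exact absurd hxA (fun hh => hdisj x hh h)
      rcases hd with rfl | hd
      · exact ⟨fun hm => absurd hm he0, fun _ => ⟨hxA, hx1B⟩⟩
      · exact ih htail (Or.inr ⟨hx1B, fun f hf => by
          have := hrel f hf
          tauto⟩) d hd
    · have he0 : s(x, x1) ∈ M := hhead _ (by rw [Walk.edges_cons]; rfl)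
      have hx1A : x1 ∈ A := by
        rcases hx1 with ⟨h, _⟩ | ⟨_, h⟩
        · exact absurd hxB (fun hh => hdisj x h hh)
        · exact h
      rcases hd with rfl | hd
      · exact ⟨fun _ => ⟨hxB, hx1A⟩, fun hn => absurd he0 hn⟩
      · exact ih htail (Or.inl ⟨hx1A, fun f hf => by
          have := hrel f hf
          tauto⟩) d hd

lemma start_edge_head {x z : V} (p : G.Walk x z) (hp : p.IsPath) {f : Sym2 V}
    (hf : f ∈ p.edges) (hx : x ∈ f) : p.edges.head? = some f := by
  induction p with
  | nil => simp at hf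
  | @cons x x1 z h' p' ih =>
    rw [Walk.edges_cons, List.mem_cons] at hf
    rcases hf with rfl | hf
    · rfl
    · exfalso
      have : x ∈ p'.support := mem_support_of_mem_edges' p' hf hx
      exact ((Walk.cons_isPath_iff h' p').mp hp).2 this

lemma two_edges_alt {x z : V} (p : G.Walk x z) (hp : p.IsPath)
    (halt : AlternatingEdges M p.edges) {e f : Sym2 V}
    (he : e ∈ p.edges) (hf : f ∈ p.edges) (hne : e ≠ f) {v : V}
    (hve : v ∈ e) (hvf : v ∈ f) : (e ∈ M ∧ f ∉ M) ∨ (e ∉ M ∧ f ∈ M) := by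
  induction p with
  | nil => simp at he
  | @cons x x1 z h' p' ih =>
    have hp' : p'.IsPath := ((Walk.cons_isPath_iff h' p').mp hp).1
    have hxs : x ∉ p'.support := ((Walk.cons_isPath_iff h' p').mp hp).2
    rw [Walk.edges_cons] at halt
    have htail : AlternatingEdges M p'.edges := halt.tail
    have hrel : ∀ g ∈ p'.edges.head?, (s(x, x1) ∈ M ↔ g ∉ M) :=
      (List.isChain_cons.mp halt).1
    rw [Walk.edges_cons, List.mem_cons] at he hf
    rcases he with rfl | he <;> rcases hf with rfl | hf
    · exact absurd rfl hne
    · -- e = s(x,x1), f ∈ p'.edges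
      have hvx1 : v = x1 := by
        rcases Sym2.mem_iff.mp hve with rfl | rfl
        · exact absurd (mem_support_of_mem_edges' p' hf hvf) hxs
        · rfl
      subst hvx1
      have hhead : p'.edges.head? = some f := start_edge_head p' hp' hf hvf
      have := hrel f (by rw [hhead]; rfl)
      tauto
    · have hvx1 : v = x1 := by
        rcases Sym2.mem_iff.mp hvf with rfl | rfl
        · exact absurd (mem_support_of_mem_edges' p' he hve) hxs
        · rfl
      subst hvx1
      have hhead : p'.edges.head? = some e := start_edge_head p' hp' he hve
      have := hrel e (by rw [hhead]; rfl)
      tauto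
    · exact ih hp' htail he hf

end KoenigHelpers2

section KoenigHelpers3

open SimpleGraph Walk

variable {V : Type} {G : SimpleGraph V} {M : Set (Sym2 V)} {A B : Set V}

lemma alt_count [DecidablePred (fun e : Sym2 V => e ∈ M)] :
    ∀ (l : List (Sym2 V)), List.Chain' (fun e f => (e ∈ M ↔ f ∉ M)) l →
    (∀ e ∈ l.head?, e ∉ M) → (∀ e ∈ l.getLast?, e ∉ M) → l ≠ [] →
    (l.filter (fun e => e ∈ M)).length + 1 =
      (l.filter (fun e => e ∉ M)).length
  | [], _, _, _, hne => absurd rfl hne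
  | [a], _, hh, _, _ => by
      have ha : a ∉ M := hh a rfl
      simp [ha]
  | a :: b :: t, hc, hh, hl, _ => by
      have ha : a ∉ M := hh a rfl
      have hab := (List.isChain_cons_cons.mp hc).1
      have hb : b ∈ M := by tauto
      have hct : List.Chain' (fun e f => (e ∈ M ↔ f ∉ M)) (b :: t) :=
        (List.isChain_cons_cons.mp hc).2
      cases t with
      | nil =>
        exfalso
        exact hl b (by simp) hb
      | cons c t' =>
        have hrec := alt_count (c :: t') hct.tail
          (fun e he => by
            simp only [List.head?_cons, Option.mem_def, Option.some.injEq] at he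
            subst he
            have := (List.isChain_cons_cons.mp hct).1
            tauto)
          (fun e he => hl e (by rw [List.getLast?_cons_cons, List.getLast?_cons_cons]; exact he))
          (by simp)
        simp only [List.filter_cons, ha, hb, decide_eq_true_eq] at *
        simp only [if_pos, if_neg, decide_not] at *
        by_cases hc' : c ∈ M <;> simp [hc', ha, hb] at hrec ⊢ <;> omega

end KoenigHelpers3

section KoenigHelpers4

open SimpleGraph Walk

variable {V : Type} [Fintype V] {G : SimpleGraph V} {M : Set (Sym2 V)} {A B : Set V}

lemma no_augmenting (hM : IsMaxMatching G M) {a v : V} (p : G.Walk a v)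
    (hp : p.IsPath) (halt : AlternatingEdges M p.edges)
    (ha : ¬ MSaturated M a) (hv : ¬ MSaturated M v) (hne : p.edges ≠ []) : False := by
  classical
  have hfinV : Finite V := inferInstance
  set Sin : Set (Sym2 V) := {e | e ∈ p.edges ∧ e ∈ M} with hSin
  set Sout : Set (Sym2 V) := {e | e ∈ p.edges ∧ e ∉ M} with hSout
  set M' : Set (Sym2 V) := (M \ Sin) ∪ Sout with hM'
  -- M' is a matching
  have hmatch : IsMatching' G M' := by
    constructor
    · rintro e (⟨heM, -⟩ | ⟨hee, -⟩)
      · exact hM.1.1 heM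
      · exact p.edges_subset_edgeSet hee
    · rintro e he f hf hef v0 ⟨hv0e, hv0f⟩
      have key : ∀ g g', g ∈ M → g ∉ Sin → g' ∈ Sout → v0 ∈ g → v0 ∈ g' → False := by
        intro g g' hgM hgS hg'S hv0g hv0g'
        have hgne : g ∉ p.edges := fun hc => hgS ⟨hc, hgM⟩
        have hsup : v0 ∈ p.support := mem_support_of_mem_edges' p hg'S.1 hv0g'
        rcases mem_support_cases p hsup with rfl | ⟨d, hd, hds⟩
        · exact ha ⟨g, hgM, hv0g⟩
        · by_cases hde : d.edge ∈ M
          · have : d.edge = g := matching_eq hM.1 hde hgM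
              (by rw [← hds]; exact Sym2.mem_mk_right _ _) hv0g
            exact hgne (this ▸ List.mem_map_of_mem (f := Dart.edge) hd)
          · rcases next_dart p halt hd with ⟨h1, h2⟩ | ⟨d', hd', h1, h2⟩
            · subst hds
              rw [h1] at *
              exact hv ⟨g, hgM, hv0g⟩
            · have hd'M : d'.edge ∈ M := by tauto
              have : d'.edge = g := matching_eq hM.1 hd'M hgM
                (by rw [hds] at h1; rw [← h1]; exact Sym2.mem_mk_left _ _) hv0g
              exact hgne (this ▸ List.mem_map_of_mem (f := Dart.edge) hd')
      rcases he with ⟨heM, heS⟩ | heS <;> rcases hf with ⟨hfM, hfS⟩ | hfS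
      · exact hM.1.2 e heM f hfM hef v0 ⟨hv0e, hv0f⟩
      · exact key e f heM heS hfS hv0e hv0f
      · exact key f e hfM hfS heS hv0f hv0e
      · rcases two_edges_alt p hp halt heS.1 hfS.1 hef hv0e hv0f with ⟨h1, _⟩ | ⟨_, h1⟩
        · exact heS.2 h1
        · exact hfS.2 h1
  -- cardinalities
  have hSinM : Sin ⊆ M := fun e he => he.2
  have hdisj : Disjoint (M \ Sin) Sout := by
    rw [Set.disjoint_left]
    rintro e ⟨heM, -⟩ ⟨-, heM'⟩
    exact heM' heM
  have e2 : M'.ncard = (M \ Sin).ncard + Sout.ncard :=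
    Set.ncard_union_eq hdisj (Set.toFinite _) (Set.toFinite _)
  have e1 : (M \ Sin).ncard = M.ncard - Sin.ncard :=
    Set.ncard_diff hSinM (Set.toFinite _)
  have hSinle : Sin.ncard ≤ M.ncard := Set.ncard_le_ncard hSinM (Set.toFinite _)
  -- counts via list filters
  have hhd : ∀ e ∈ p.edges.head?, e ∉ M := by
    intro e hee heM
    exact ha ⟨e, heM, head_mem_of_edges_head? p hee⟩
  have hlst : ∀ e ∈ p.edges.getLast?, e ∉ M := by
    intro e hee heM
    exact hv ⟨e, heM, end_mem_of_edges_getLast? p hee⟩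
  have hnd : p.edges.Nodup := hp.edges_nodup
  have hSinCard : Sin.ncard = (p.edges.filter (fun e => e ∈ M)).length := by
    have : Sin = ↑(p.edges.filter (fun e => e ∈ M)).toFinset := by
      ext e; simp [hSin, List.mem_filter]
    rw [this, Set.ncard_coe_finset, List.toFinset_card_of_nodup (hnd.filter _)]
  have hSoutCard : Sout.ncard = (p.edges.filter (fun e => e ∉ M)).length := by
    have : Sout = ↑(p.edges.filter (fun e => e ∉ M)).toFinset := by
      ext e; simp [hSout, List.mem_filter]
    rw [this, Set.ncard_coe_finset, List.toFinset_card_of_nodup (hnd.filter _)]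
  have hcnt := alt_count (M := M) p.edges halt hhd hlst hne
  have hle := hM.2 M' hmatch
  omega

end KoenigHelpers4

section KoenigHelpers5

open SimpleGraph Walk

variable {V : Type} [Fintype V] {G : SimpleGraph V} {M : Set (Sym2 V)} {A B : Set V}

lemma isPath_concat {x y z : V} {q : G.Walk x y} (hq : q.IsPath) (h : G.Adj y z)
    (hz : z ∉ q.support) : (q.concat h).IsPath := by
  rw [Walk.isPath_def, Walk.support_concat]
  exact List.nodup_append'.mpr ⟨hq.support_nodup, List.nodup_singleton _,
    by intro t ht ht'; simp at ht'; subst ht'; exact hz ht⟩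

lemma alt_concat {x y z : V} {q : G.Walk x y} (h : G.Adj y z)
    (halt : AlternatingEdges M q.edges)
    (hjunc : ∀ e ∈ q.edges.getLast?, (e ∈ M ↔ s(y, z) ∉ M)) :
    AlternatingEdges M (q.concat h).edges := by
  rw [Walk.edges_concat, List.concat_eq_append]
  exact List.isChain_append.mpr ⟨halt, List.isChain_singleton _,
    by intro e he f hf; simp at hf; subst hf; exact hjunc e he⟩

lemma step_lemma (hbip : IsBipartition G A B) (hM : IsMaxMatching G M)
    {a u : V} (q : G.Walk a u) (haA : a ∈ A) (hau : ¬ MSaturated M a)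
    (huA : u ∈ A)
    (hq : q.IsPath) (halt : AlternatingEdges M q.edges)
    (hend : q.edges = [] ∨ ∃ e ∈ M, q.edges.getLast? = some e)
    {v : V} (huv : G.Adj u v) (huvM : s(u, v) ∉ M) :
    ∃ f ∈ M, v ∈ f ∧ OnAltPath G M A f := by
  have hdisj : ∀ x, x ∈ A → x ∈ B → False := fun x hx hx' =>
    Set.disjoint_left.mp hbip.1 hx hx'
  have hvB : v ∈ B := by
    rcases hbip.2.2 huv with ⟨_, h⟩ | ⟨h, _⟩
    · exact h
    · exact absurd huA (fun hh => hdisj u hh h)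
  have hjunc : ∀ e ∈ q.edges.getLast?, (e ∈ M ↔ s(u, v) ∉ M) := by
    intro e he
    rcases hend with h0 | ⟨e', he', hlast⟩
    · rw [h0] at he; simp at he
    · rw [hlast] at he; simp at he; subst he
      exact ⟨fun _ => huvM, fun _ => he'⟩
  have hlastM : ∀ e ∈ q.edges.getLast?, e ∈ M := by
    intro e he
    rcases hend with h0 | ⟨e', he', hlast⟩
    · rw [h0] at he; simp at he
    · rw [hlast] at he; simp at he; subst he; exact he'
  have hnotsup : ∀ v', v' ≠ a → v' ≠ u → (∀ g ∈ M, v' ∈ g → g ∉ q.edges) →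
      v' ∉ q.support := by
    intro v' hv'a hv'u hno hsup
    rcases mem_support_cases q hsup with rfl | ⟨d, hd, hds⟩
    · exact hv'a rfl
    · by_cases hde : d.edge ∈ M
      · exact hno d.edge hde (by rw [← hds]; exact Sym2.mem_mk_right _ _)
          (List.mem_map_of_mem (f := Dart.edge) hd)
      · rcases next_dart q halt hd with ⟨h1, _⟩ | ⟨d', hd', h1, h2⟩
        · exact hv'u (hds ▸ h1)
        · have hd'M : d'.edge ∈ M := by tauto
          exact hno d'.edge hd'M (by rw [← hds, ← h1]; exact Sym2.mem_mk_left _ _)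
            (List.mem_map_of_mem (f := Dart.edge) hd')
  have hvu : v ≠ u := huv.ne'
  have hva : v ≠ a := fun h => hdisj a haA (h ▸ hvB)
  by_cases hsat : MSaturated M v
  · obtain ⟨f, hfM, hvf⟩ := hsat
    obtain ⟨w, hfw⟩ := Sym2.mem_iff_exists.mp hvf
    have hwf : w ∈ f := hfw ▸ Sym2.mem_mk_right _ _
    refine ⟨f, hfM, hvf, ?_⟩
    by_cases hfq : f ∈ q.edges
    · exact ⟨a, u, q, haA, hau, hq, halt, hfq⟩
    · have hvw : G.Adj v w := (SimpleGraph.mem_edgeSet G).mp (hM.1.1 (hfw ▸ hfM))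
      have hno : ∀ g ∈ M, v ∈ g → g ∉ q.edges := fun g hg hvg =>
        (matching_eq hM.1 hg hfM hvg hvf) ▸ hfq
      have hvsup : v ∉ q.support := hnotsup v hva hvu hno
      have hwa : w ≠ a := fun h => hau ⟨f, hfM, h ▸ hwf⟩
      have hwu : w ≠ u := by
        intro h
        rcases hend with h0 | ⟨e', he', hlast⟩
        · have hq0 : u = a := by
            cases q with
            | nil => rfl
            | cons h' p' => simp [Walk.edges_cons] at h0
          exact hau ⟨f, hfM, by rw [← hq0, ← h]; exact hwf⟩
        · have hue' : u ∈ e' := end_mem_of_edges_getLast? q hlast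
          have hfe : f = e' := matching_eq hM.1 hfM he' (h ▸ hwf) hue'
          exact hfq (hfe ▸ List.mem_of_getLast? hlast)
      have hwsup : w ∉ q.support := hnotsup w hwa hwu
        (fun g hg hwg => (matching_eq hM.1 hg hfM hwg hwf) ▸ hfq)
      have hq1 : (q.concat huv).IsPath := isPath_concat hq huv hvsup
      have halt1 : AlternatingEdges M (q.concat huv).edges := alt_concat huv halt hjunc
      have hwsup1 : w ∉ (q.concat huv).support := by
        rw [Walk.support_concat]
        intro h
        rcases List.mem_append.mp h with h | h
        · exact hwsup h
        · simp at h; exact hvw.ne' h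
      have hq2 : ((q.concat huv).concat hvw).IsPath := isPath_concat hq1 hvw hwsup1
      have halt2 : AlternatingEdges M ((q.concat huv).concat hvw).edges := by
        refine alt_concat hvw halt1 ?_
        intro e he
        rw [Walk.edges_concat, List.concat_eq_append, List.getLast?_concat] at he
        simp at he; subst he
        exact ⟨fun h => absurd h huvM, fun h => by rw [← hfw] at h; exact absurd hfM h⟩
      refine ⟨a, w, (q.concat huv).concat hvw, haA, hau, hq2, halt2, ?_⟩
      rw [Walk.edges_concat, List.concat_eq_append]
      rw [hfw]
      exact List.mem_append.mpr (Or.inr (by simp))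
  · exfalso
    have hno : ∀ g ∈ M, v ∈ g → g ∉ q.edges := fun g hg hvg _ => hsat ⟨g, hg, hvg⟩
    have hvsup : v ∉ q.support := hnotsup v hva hvu hno
    have hq1 : (q.concat huv).IsPath := isPath_concat hq huv hvsup
    have halt1 : AlternatingEdges M (q.concat huv).edges := alt_concat huv halt hjunc
    refine no_augmenting hM (q.concat huv) hq1 halt1 hau hsat ?_
    rw [Walk.edges_concat, List.concat_eq_append]
    simp

end KoenigHelpers5

section KoenigHelpers6

open SimpleGraph Walk

variable {V : Type} [Fintype V] {G : SimpleGraph V} {M : Set (Sym2 V)} {A B : Set V}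

lemma koenigCover_isCover (hbip : IsBipartition G A B) (hM : IsMaxMatching G M) :
    _root_.IsVertexCover G (koenigCoverFrom G M A B) := by
  have key : ∀ u v, G.Adj u v → u ∈ A → v ∈ B →
      u ∈ koenigCoverFrom G M A B ∨ v ∈ koenigCoverFrom G M A B := by
    intro u v huv huA hvB
    by_cases hus : MSaturated M u
    · obtain ⟨e, heM, hue⟩ := hus
      by_cases hOP : OnAltPath G M A e
      · by_cases hvM : s(u, v) ∈ M
        · have hev : e = s(u, v) := matching_eq hM.1 heM hvM hue (Sym2.mem_mk_left _ _)
          exact Or.inr (Or.inl ⟨hvB, e, heM, hev ▸ Sym2.mem_mk_right u v, hOP⟩)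
        · obtain ⟨a, z, p, haA, hau, hp, halt, hep⟩ := hOP
          obtain ⟨d, hd, hde⟩ := List.mem_map.mp hep
          have hhd : ∀ f ∈ p.edges.head?, f ∉ M := fun f hf hfM =>
            hau ⟨f, hfM, head_mem_of_edges_head? p hf⟩
          have hdir := dart_direction hbip p halt (Or.inl ⟨haA, hhd⟩) d hd
          have hdM : d.edge ∈ M := hde ▸ heM
          obtain ⟨hfstB, hsndA⟩ := hdir.1 hdM
          have hue' : u ∈ d.edge := hde ▸ hue
          have hu' : u = d.snd := by
            rcases Sym2.mem_iff.mp hue' with h | h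
            · exact absurd hfstB (fun hh => Set.disjoint_left.mp hbip.1 (h ▸ huA) hh)
            · exact h
          obtain ⟨q, t, hqt, hql, hqs⟩ := exists_prefix_walk p hd
          have hqpath : q.IsPath := by
            rw [Walk.isPath_def]
            exact hqs.sublist.nodup hp.support_nodup
          have hqalt : AlternatingEdges M q.edges := by
            have := hqt ▸ halt
            exact (List.isChain_append.mp this).1
          have hend : q.edges = [] ∨ ∃ e' ∈ M, q.edges.getLast? = some e' :=
            Or.inr ⟨e, heM, by rw [hql, hde]⟩
          have huv' : G.Adj d.snd v := hu' ▸ huv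
          have huvM : s(d.snd, v) ∉ M := by
            intro h
            exact hvM (hu' ▸ h)
          obtain ⟨f, hfM, hvf, hOPf⟩ :=
            step_lemma hbip hM q haA hau hsndA hqpath hqalt hend huv' huvM
          exact Or.inr (Or.inl ⟨hvB, f, hfM, hvf, hOPf⟩)
      · exact Or.inl (Or.inr ⟨huA, e, heM, hue, hOP⟩)
    · have huvM : s(u, v) ∉ M := fun h => hus ⟨_, h, Sym2.mem_mk_left _ _⟩
      obtain ⟨f, hfM, hvf, hOPf⟩ :=
        step_lemma hbip hM (Walk.nil' u) huA hus huA (Walk.IsPath.nil) (by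
          simp only [Walk.edges_nil]; exact List.isChain_nil) (Or.inl (by simp)) huv huvM
      exact Or.inr (Or.inl ⟨hvB, f, hfM, hvf, hOPf⟩)
  intro u v huv
  rcases hbip.2.2 huv with ⟨h1, h2⟩ | ⟨h1, h2⟩
  · exact key u v huv h1 h2
  · rcases key v u huv.symm h2 h1 with h' | h'
    · exact Or.inr h'
    · exact Or.inl h'

end KoenigHelpers6

section KoenigHelpers7

open SimpleGraph Walk

variable {V : Type} [Fintype V] {G : SimpleGraph V} {M : Set (Sym2 V)} {A B : Set V}

lemma cover_choice (hM0 : IsMatching' G M) {C'' : Set V} (hC : _root_.IsVertexCover G C'') :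
    ∃ f : Sym2 V → V, (∀ e ∈ M, f e ∈ e ∧ f e ∈ C'') ∧ Set.InjOn f M := by
  classical
  rcases Set.eq_empty_or_nonempty M with rfl | ⟨e₀, he₀⟩
  · exact ⟨fun e => e.out.1, by simp, by simp [Set.InjOn]⟩
  · have hne : Nonempty V := by
      induction e₀ using Sym2.ind with
      | _ u v => exact ⟨u⟩
    have hex : ∀ e ∈ M, ∃ x, x ∈ e ∧ x ∈ C'' := by
      intro e he
      have hes : e ∈ G.edgeSet := hM0.1 he
      induction e using Sym2.ind with
      | _ u v =>
        rcases hC ((SimpleGraph.mem_edgeSet G).mp hes) with h | h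
        · exact ⟨u, Sym2.mem_mk_left _ _, h⟩
        · exact ⟨v, Sym2.mem_mk_right _ _, h⟩
    refine ⟨fun e => if he : ∃ x, x ∈ e ∧ x ∈ C'' then he.choose else Classical.arbitrary V,
      ?_, ?_⟩
    · intro e he
      have h := hex e he
      simp only [dif_pos h]
      exact h.choose_spec
    · intro e he e' he' hfe
      have h := hex e he
      have h' := hex e' he'
      simp only [dif_pos h, dif_pos h'] at hfe
      exact matching_eq hM0 he he' (hfe ▸ h.choose_spec.1) h'.choose_spec.1

lemma matching_le_cover (hM0 : IsMatching' G M) {C'' : Set V} (hC : _root_.IsVertexCover G C'') :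
    M.ncard ≤ C''.ncard := by
  obtain ⟨f, hf, hinj⟩ := cover_choice hM0 hC
  calc M.ncard = (f '' M).ncard := (Set.ncard_image_of_injOn hinj).symm
    _ ≤ C''.ncard := Set.ncard_le_ncard (fun x ⟨e, he, hfe⟩ => hfe ▸ (hf e he).2)
      (Set.toFinite _)

lemma bip_rep (hbip : IsBipartition G A B) (hM0 : IsMatching' G M) :
    ∀ e ∈ M, ∃ a b, a ∈ A ∧ b ∈ B ∧ e = s(a, b) := by
  intro e he
  have hes : e ∈ G.edgeSet := hM0.1 he
  induction e using Sym2.ind with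
  | _ u v =>
    rcases hbip.2.2 ((SimpleGraph.mem_edgeSet G).mp hes) with ⟨h1, h2⟩ | ⟨h1, h2⟩
    · exact ⟨u, v, h1, h2, rfl⟩
    · exact ⟨v, u, h2, h1, Sym2.eq_swap⟩

lemma koenig_ncard (hbip : IsBipartition G A B) (hM : IsMaxMatching G M) :
    (koenigCoverFrom G M A B).ncard = M.ncard := by
  classical
  rcases Set.eq_empty_or_nonempty M with hMe | ⟨e₀, he₀⟩
  · have : koenigCoverFrom G M A B = ∅ := by
      rw [Set.eq_empty_iff_forall_notMem]
      rintro x (⟨-, e, he, -⟩ | ⟨-, e, he, -⟩) <;> simp [hMe] at he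
    rw [this, hMe, Set.ncard_empty, Set.ncard_empty]
  · have hne : Nonempty V := by
      induction e₀ using Sym2.ind with
      | _ u v => exact ⟨u⟩
    have hdisj : ∀ x, x ∈ A → x ∈ B → False := fun x hx hx' =>
      Set.disjoint_left.mp hbip.1 hx hx'
    set g : Sym2 V → V := fun e =>
      if he : ∃ a b, a ∈ A ∧ b ∈ B ∧ e = s(a, b) then
        (if OnAltPath G M A e then he.choose_spec.choose else he.choose)
      else Classical.arbitrary V with hg
    have hgprop : ∀ e ∈ M, g e ∈ e ∧
        (OnAltPath G M A e → g e ∈ B) ∧ (¬ OnAltPath G M A e → g e ∈ A) := by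
      intro e he
      have h := bip_rep hbip hM.1 e he
      obtain ⟨ha, hb, hab⟩ := h.choose_spec.choose_spec
      simp only [hg, dif_pos h]
      by_cases hOP : OnAltPath G M A e
      · simp only [if_pos hOP]
        refine ⟨?_, fun _ => hb, fun hh => absurd hOP hh⟩
        have hmm := Sym2.mem_mk_right h.choose h.choose_spec.choose
        rwa [← hab] at hmm
      · simp only [if_neg hOP]
        refine ⟨?_, fun hh => absurd hh hOP, fun _ => ha⟩
        have hmm := Sym2.mem_mk_left h.choose h.choose_spec.choose
        rwa [← hab] at hmm
    have himg : koenigCoverFrom G M A B = g '' M := by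
      ext x
      constructor
      · rintro (⟨hxB, e, he, hxe, hOP⟩ | ⟨hxA, e, he, hxe, hOP⟩)
        · refine ⟨e, he, ?_⟩
          have h := bip_rep hbip hM.1 e he
          obtain ⟨ha, hb, hab⟩ := h.choose_spec.choose_spec
          simp only [hg, dif_pos h, if_pos hOP]
          rw [hab] at hxe
          rcases Sym2.mem_iff.mp hxe with rfl | rfl
          · exact absurd hxB (fun hh => hdisj _ ha hh)
          · rfl
        · refine ⟨e, he, ?_⟩
          have h := bip_rep hbip hM.1 e he
          obtain ⟨ha, hb, hab⟩ := h.choose_spec.choose_spec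
          simp only [hg, dif_pos h, if_neg hOP]
          rw [hab] at hxe
          rcases Sym2.mem_iff.mp hxe with rfl | rfl
          · rfl
          · exact absurd hxA (fun hh => hdisj _ hh hb)
      · rintro ⟨e, he, rfl⟩
        obtain ⟨hge, hgB, hgA⟩ := hgprop e he
        by_cases hOP : OnAltPath G M A e
        · exact Or.inl ⟨hgB hOP, e, he, hge, hOP⟩
        · exact Or.inr ⟨hgA hOP, e, he, hge, hOP⟩
    have hinj : Set.InjOn g M := by
      intro e he e' he' hge
      exact matching_eq hM.1 he he' (hge ▸ (hgprop e he).1) (hgprop e' he').1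
    rw [himg, Set.ncard_image_of_injOn hinj]

lemma koenig_min (hbip : IsBipartition G A B) (hM : IsMaxMatching G M) :
    IsMinVertexCover G (koenigCoverFrom G M A B) := by
  refine ⟨koenigCover_isCover hbip hM, fun C'' hC'' => ?_⟩
  rw [koenig_ncard hbip hM]
  exact matching_le_cover hM.1 hC''

lemma min_cover_eq_image (hbip : IsBipartition G A B) (hM : IsMaxMatching G M)
    {C' : Set V} (hC' : IsMinVertexCover G C') :
    ∃ f : Sym2 V → V, (∀ e ∈ M, f e ∈ e ∧ f e ∈ C') ∧ Set.InjOn f M ∧ C' = f '' M := by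
  obtain ⟨f, hf, hinj⟩ := cover_choice hM.1 hC'.1
  refine ⟨f, hf, hinj, ?_⟩
  have h1 : f '' M ⊆ C' := fun x ⟨e, he, hfe⟩ => hfe ▸ (hf e he).2
  have h2 : C'.ncard ≤ (f '' M).ncard := by
    rw [Set.ncard_image_of_injOn hinj]
    calc C'.ncard ≤ (koenigCoverFrom G M A B).ncard :=
          hC'.2 _ (koenigCover_isCover hbip hM)
      _ = M.ncard := koenig_ncard hbip hM
  exact (Set.eq_of_subset_of_ncard_le h1 h2 (Set.toFinite _)).symm

lemma min_cover_saturated (hbip : IsBipartition G A B) (hM : IsMaxMatching G M)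
    {C' : Set V} (hC' : IsMinVertexCover G C') :
    ∀ v ∈ C', MSaturated M v := by
  obtain ⟨f, hf, -, hCf⟩ := min_cover_eq_image hbip hM hC'
  rintro v hv
  rw [hCf] at hv
  obtain ⟨e, he, rfl⟩ := hv
  exact ⟨e, he, (hf e he).1⟩

lemma min_cover_unique_endpoint (hbip : IsBipartition G A B) (hM : IsMaxMatching G M)
    {C' : Set V} (hC' : IsMinVertexCover G C') :
    ∀ e ∈ M, ∀ x y : V, x ∈ e → y ∈ e → x ≠ y → x ∈ C' → y ∈ C' → False := by
  obtain ⟨f, hf, -, hCf⟩ := min_cover_eq_image hbip hM hC'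
  intro e he x y hx hy hxy hxC hyC
  rw [hCf] at hxC hyC
  obtain ⟨e₁, he₁, hfx⟩ := hxC
  obtain ⟨e₂, he₂, hfy⟩ := hyC
  have hx1 : e₁ = e := matching_eq hM.1 he₁ he (hfx ▸ (hf e₁ he₁).1) hx
  have hy1 : e₂ = e := matching_eq hM.1 he₂ he (hfy ▸ (hf e₂ he₂).1) hy
  exact hxy (hfx ▸ hfy ▸ (by rw [hx1, hy1]))

end KoenigHelpers7

section KoenigHelpers8

open SimpleGraph Walk

variable {V : Type} [Fintype V] {G : SimpleGraph V} {M : Set (Sym2 V)} {A B : Set V}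

lemma cover_dart_lemma {C' : Set V} (hcov : _root_.IsVertexCover G C')
    (hF2 : ∀ e ∈ M, ∀ x y : V, x ∈ e → y ∈ e → x ≠ y → x ∈ C' → y ∈ C' → False) :
    ∀ {x z : V} (p : G.Walk x z), AlternatingEdges M p.edges →
    ((x ∉ C' ∧ ∀ f ∈ p.edges.head?, f ∉ M) ∨ (x ∈ C' ∧ ∀ f ∈ p.edges.head?, f ∈ M)) →
    ∀ d ∈ p.darts, d.edge ∈ M → d.fst ∈ C' ∧ d.snd ∉ C' := by
  intro x z p
  induction p with
  | nil => intro _ _ d hd; simp at hd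
  | @cons x x1 z h' p' ih =>
    intro halt hstart d hd hdM
    rw [Walk.edges_cons] at halt
    have htail := halt.tail
    have hrel : ∀ f ∈ p'.edges.head?, (s(x, x1) ∈ M ↔ f ∉ M) :=
      (List.isChain_cons.mp halt).1
    rw [Walk.darts_cons, List.mem_cons] at hd
    rcases hstart with ⟨hxC, hhead⟩ | ⟨hxC, hhead⟩
    · have he0 : s(x, x1) ∉ M := hhead _ (by rw [Walk.edges_cons]; rfl)
      rcases hd with rfl | hd
      · exact absurd hdM he0
      · have hx1C : x1 ∈ C' := (hcov h').resolve_left hxC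
        exact ih htail (Or.inr ⟨hx1C, fun f hf => by have := hrel f hf; tauto⟩) d hd hdM
    · have he0 : s(x, x1) ∈ M := hhead _ (by rw [Walk.edges_cons]; rfl)
      rcases hd with rfl | hd
      · exact ⟨hxC, fun hx1C => hF2 _ he0 x x1 (Sym2.mem_mk_left _ _)
          (Sym2.mem_mk_right _ _) h'.ne hxC hx1C⟩
      · have hx1C : x1 ∉ C' := fun hx1C => hF2 _ he0 x x1 (Sym2.mem_mk_left _ _)
          (Sym2.mem_mk_right _ _) h'.ne hxC hx1C
        exact ih htail (Or.inl ⟨hx1C, fun f hf => by have := hrel f hf; tauto⟩) d hd hdM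

lemma koenig_extremal (hbip : IsBipartition G A B) (hM : IsMaxMatching G M)
    {C' : Set V} (hC' : IsMinVertexCover G C') :
    A ∩ C' ⊆ A ∩ koenigCoverFrom G M A B ∧
      B ∩ koenigCoverFrom G M A B ⊆ B ∩ C' := by
  have hF1 := min_cover_saturated hbip hM hC'
  have hF2 := min_cover_unique_endpoint hbip hM hC'
  have hdisj : ∀ x, x ∈ A → x ∈ B → False := fun x hx hx' =>
    Set.disjoint_left.mp hbip.1 hx hx'
  have master : ∀ e ∈ M, OnAltPath G M A e →
      ∃ b u : V, e = s(b, u) ∧ b ∈ B ∧ u ∈ A ∧ b ∈ C' ∧ u ∉ C' := by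
    rintro e heM ⟨a, z, p, haA, hau, hp, halt, hep⟩
    obtain ⟨d, hd, hde⟩ := List.mem_map.mp hep
    have hhd : ∀ f ∈ p.edges.head?, f ∉ M := fun f hf hfM =>
      hau ⟨f, hfM, head_mem_of_edges_head? p hf⟩
    have haC : a ∉ C' := fun h => hau (hF1 a h)
    have hdir := (dart_direction hbip p halt (Or.inl ⟨haA, hhd⟩) d hd).1 (hde ▸ heM)
    have hcd := cover_dart_lemma hC'.1 hF2 p halt (Or.inl ⟨haC, hhd⟩) d hd (hde ▸ heM)
    exact ⟨d.fst, d.snd, by rw [← hde]; rfl, hdir.1, hdir.2, hcd.1, hcd.2⟩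
  constructor
  · rintro x ⟨hxA, hxC⟩
    refine ⟨hxA, ?_⟩
    obtain ⟨e, heM, hxe⟩ := hF1 x hxC
    by_cases hOP : OnAltPath G M A e
    · exfalso
      obtain ⟨b, u, hbu, hbB, huA, hbC, huC⟩ := master e heM hOP
      rw [hbu] at hxe
      rcases Sym2.mem_iff.mp hxe with rfl | rfl
      · exact hdisj x hxA hbB
      · exact huC hxC
    · exact Or.inr ⟨hxA, e, heM, hxe, hOP⟩
  · rintro x ⟨hxB, hxK⟩
    refine ⟨hxB, ?_⟩
    rcases hxK with ⟨-, e, heM, hxe, hOP⟩ | ⟨hxA, -⟩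
    · obtain ⟨b, u, hbu, hbB, huA, hbC, huC⟩ := master e heM hOP
      rw [hbu] at hxe
      rcases Sym2.mem_iff.mp hxe with rfl | rfl
      · exact hbC
      · exact absurd hxB (fun hh => hdisj x huA hh)
    · exact absurd hxB (fun hh => hdisj x hxA hh)

end KoenigHelpers8


/-- For a finite bipartite graph `G` with bipartition `(A,B)`, a
maximum matching `M` and a minimum vertex cover `C`, the cover `C` equals the
`A`-König cover of `G` constructed from `M` if and only if every minimum vertex
cover `C'` satisfies `A ∩ C' ⊆ A ∩ C` and `B ∩ C ⊆ B ∩ C'`. -/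
theorem koenigCover_eq_iff {V : Type} [Fintype V] (G : SimpleGraph V)
    (A B : Set V) (hbip : IsBipartition G A B)
    (M : Set (Sym2 V)) (hM : IsMaxMatching G M)
    (C : Set V) (hC : IsMinVertexCover G C) :
    C = koenigCoverFrom G M A B ↔
      ∀ C' : Set V, IsMinVertexCover G C' →
        A ∩ C' ⊆ A ∩ C ∧ B ∩ C ⊆ B ∩ C' := by

  have hKmin := koenig_min hbip hM
  constructor
  · rintro rfl
    exact fun C' h => koenig_extremal hbip hM h
  · intro hext
    have h1 := hext _ hKmin
    have h2 := koenig_extremal hbip hM hC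
    have hA : A ∩ C = A ∩ koenigCoverFrom G M A B := Set.Subset.antisymm h2.1 h1.1
    have hB : B ∩ C = B ∩ koenigCoverFrom G M A B := Set.Subset.antisymm h1.2 h2.2
    have hcover : ∀ (S : Set V), S = (A ∩ S) ∪ (B ∩ S) := by
      intro S
      ext x
      have hx : x ∈ A ∪ B := by rw [hbip.2.1]; trivial
      constructor
      · intro hxS
        rcases hx with h | h
        · exact Or.inl ⟨h, hxS⟩
        · exact Or.inr ⟨h, hxS⟩
      · rintro (⟨-, h⟩ | ⟨-, h⟩) <;> exact h
    rw [hcover C, hA, hB, ← hcover]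
end

section
/- Let G be a finite simple graph with at least one edge and let k be a positive integer. Suppose there exist a tree T in which every vertex has degree at most 3 and, for each vertex u of G, a nontrivial subtree T_u of T, such that (i) if uv ∈ E(G) then T_u and T_v have at least one vertex of T in common, and (ii) every edge of T belongs to at most k of the subtrees T_u. Then mmw(G) ≤ k. -/
open SimpleGraph

/-- A matching of the bipartite graph `G[A, V∖A]` crossing the cut `(A, V∖A)`:
a set of pairwise vertex-disjoint edges of `G` with one endpoint in `A` and
the other outside `A`. -/
def IsCrossMatching {V : Type} (G : SimpleGraph V) (A : Set V)
    (M : Set (Sym2 V)) : Prop :=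
  (∀ e ∈ M, ∃ u v : V, e = s(u, v) ∧ G.Adj u v ∧ u ∈ A ∧ v ∉ A) ∧
    ∀ e ∈ M, ∀ f ∈ M, e ≠ f → ∀ w : V, ¬ (w ∈ e ∧ w ∈ f)

/-- The mm-value of the cut `(A, V∖A)`: the size of a maximum matching of the
bipartite graph consisting of the edges of `G` crossing the cut. -/
noncomputable def mmValue {V : Type} (G : SimpleGraph V) (A : Set V) : ℕ :=
  sSup {n : ℕ | ∃ M : Set (Sym2 V), IsCrossMatching G A M ∧ M.ncard = n}

/-- A branch decomposition over `V`: a tree `T` in which every vertex has degree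
at most `3`, together with a bijection from the leaves of `T` to `V`. -/
structure BranchDecomp (V N : Type) where
  tree : SimpleGraph N
  isTree : tree.IsTree
  deg_le : ∀ x : N, (tree.neighborSet x).ncard ≤ 3
  leafEquiv : {x : N // (tree.neighborSet x).ncard = 1} ≃ V

/-- For an (oriented) edge `ab` of the decomposition tree, the side of the induced
partition of `V` consisting of the elements whose leaf lies in the component of
`a` after removing the edge `ab`: those leaves whose path to `a` avoids `b`. -/
def BranchDecomp.side {V N : Type} (D : BranchDecomp V N) (a b : N) : Set V :=
  {g : V | ∃ p : D.tree.Walk (D.leafEquiv.symm g : N) a, p.IsPath ∧ b ∉ p.support}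

/-- The maximum matching width of `G`: the minimum over all branch decompositions
over `V(G)` of the maximum mm-value of an edge of the decomposition tree
(and `0` if no branch decomposition exists, i.e. if `|V(G)| ≤ 1`). -/
noncomputable def mmw {V : Type} (G : SimpleGraph V) : ℕ :=
  sInf {k : ℕ | ∃ (N : Type) (_ : Fintype N) (D : BranchDecomp V N),
    ∀ a b : N, D.tree.Adj a b → mmValue G (D.side a b) ≤ k}

/-- A subtree of a tree `T`: a nonempty set of vertices that is connected in `T`. -/
def IsSubtree {N : Type} (T : SimpleGraph N) (S : Set N) : Prop :=
  S.Nonempty ∧ ∀ a ∈ S, ∀ b ∈ S,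
    ∃ p : T.Walk a b, p.IsPath ∧ ∀ c ∈ p.support, c ∈ S

/-- A nontrivial subtree: a subtree containing at least one edge of `T`. -/
def IsNontrivialSubtree {N : Type} (T : SimpleGraph N) (S : Set N) : Prop :=
  IsSubtree T S ∧ ∃ a ∈ S, ∃ b ∈ S, T.Adj a b

/-- A tree decomposition of `G`. -/
structure TreeDecomp (V N : Type) (G : SimpleGraph V) where
  tree : SimpleGraph N
  isTree : tree.IsTree
  bag : N → Set V
  mem_bag : ∀ v : V, ∃ t : N, v ∈ bag t
  edge_bag : ∀ ⦃u v : V⦄, G.Adj u v → ∃ t : N, u ∈ bag t ∧ v ∈ bag t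
  path_bag : ∀ (t₁ t₂ t₃ : N) (p : tree.Walk t₁ t₃), p.IsPath → t₂ ∈ p.support →
    bag t₁ ∩ bag t₃ ⊆ bag t₂

/-- The treewidth of `G`: the minimum over all tree decompositions of `G` of the
maximum bag size minus one. -/
noncomputable def tw {V : Type} (G : SimpleGraph V) : ℕ :=
  sInf {w : ℕ | ∃ (N : Type) (_ : Fintype N) (D : TreeDecomp V N G),
    ∀ t : N, (D.bag t).ncard ≤ w + 1}

/-- A graph is chordal if every cycle of length at least 4 has a chord, i.e. an
edge of the graph joining two vertices of the cycle that is not an edge of the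
cycle. -/
def IsChordal {V : Type} (H : SimpleGraph V) : Prop :=
  ∀ (v : V) (c : H.Walk v v), c.IsCycle → 4 ≤ c.length →
    ∃ u w : V, u ∈ c.support ∧ w ∈ c.support ∧ H.Adj u w ∧ s(u, w) ∉ c.edges

/-- A maximal clique of `H`: a clique not properly contained in any other clique. -/
def IsMaximalClique {V : Type} (H : SimpleGraph V) (X : Set V) : Prop :=
  H.IsClique X ∧ ∀ Y : Set V, H.IsClique Y → X ⊆ Y → Y = X

/-- `S` separates `u` from `v` in `H`: every walk from `u` to `v` meets `S`. -/
def Separates {V : Type} (H : SimpleGraph V) (S : Set V) (u v : V) : Prop :=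
  ∀ p : H.Walk u v, ∃ w ∈ p.support, w ∈ S

/-- `S` is a minimal separator of `H`: there are vertices `u, v ∉ S` such that
removing `S` disconnects `u` from `v` and no proper subset of `S` does so. -/
def IsMinimalSeparator {V : Type} (H : SimpleGraph V) (S : Set V) : Prop :=
  ∃ u v : V, u ∉ S ∧ v ∉ S ∧ Separates H S u v ∧
    ∀ S' : Set V, S' ⊂ S → ¬ Separates H S' u v


open SimpleGraph
open scoped Classical

namespace MMW
variable {X : Type}

/-- descendants of `b` under parent map `q` -/
def PDesc (q : X → X) (b : X) : Set X := {x | ∃ n, q^[n] x = b}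

lemma iterate_r {q : X → X} {r : X} (hq : q r = r) (n : ℕ) : q^[n] r = r := by
  induction n with
  | zero => rfl
  | succ n ih => rw [Function.iterate_succ_apply', ih, hq]

lemma eq_r_of_qfix {q : X → X} {r : X} (hwf : ∀ x, ∃ n, q^[n] x = r) {x : X}
    (h : q x = x) : x = r := by
  obtain ⟨n, hn⟩ := hwf x
  rw [iterate_r h n] at hn; exact hn

noncomputable def pdepth {q : X → X} {r : X} (hwf : ∀ x, ∃ n, q^[n] x = r) (x : X) : ℕ :=
  Nat.find (hwf x)

lemma iterate_pdepth {q : X → X} {r : X} (hwf : ∀ x, ∃ n, q^[n] x = r) (x : X) :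
    q^[pdepth hwf x] x = r := Nat.find_spec (hwf x)

lemma pdepth_le {q : X → X} {r : X} (hwf : ∀ x, ∃ n, q^[n] x = r) {x : X} {n : ℕ}
    (h : q^[n] x = r) : pdepth hwf x ≤ n := Nat.find_le h

lemma pdepth_r {q : X → X} {r : X} (hwf : ∀ x, ∃ n, q^[n] x = r) : pdepth hwf r = 0 := by
  simpa using pdepth_le hwf (by rfl : q^[0] r = r)

lemma pdepth_pos {q : X → X} {r : X} (hwf : ∀ x, ∃ n, q^[n] x = r) {x : X} (hx : x ≠ r) :
    0 < pdepth hwf x := by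
  rcases Nat.eq_zero_or_pos (pdepth hwf x) with h | h
  · exact absurd (by simpa [h] using iterate_pdepth hwf x) hx
  · exact h

lemma pdepth_q_eq {q : X → X} {r : X} (hwf : ∀ x, ∃ n, q^[n] x = r) {x : X} (hx : x ≠ r) :
    pdepth hwf x = pdepth hwf (q x) + 1 := by
  have h1 : q^[pdepth hwf x - 1] (q x) = r := by
    rw [← Function.iterate_succ_apply, Nat.succ_eq_add_one,
      Nat.sub_add_cancel (pdepth_pos hwf hx)]
    exact iterate_pdepth hwf x
  have h2 : pdepth hwf (q x) ≤ pdepth hwf x - 1 := pdepth_le hwf h1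
  have h3 : pdepth hwf x ≤ pdepth hwf (q x) + 1 := by
    apply pdepth_le hwf
    rw [Function.iterate_succ_apply]
    exact iterate_pdepth hwf (q x)
  have := pdepth_pos hwf hx
  omega

lemma pdepth_q_lt {q : X → X} {r : X} (hwf : ∀ x, ∃ n, q^[n] x = r) {x : X} (hx : x ≠ r) :
    pdepth hwf (q x) < pdepth hwf x := by
  rw [pdepth_q_eq hwf hx]; omega

lemma q_ne_self {q : X → X} {r : X} (hwf : ∀ x, ∃ n, q^[n] x = r) {x : X} (hx : x ≠ r) :
    q x ≠ x := fun h => hx (eq_r_of_qfix hwf h)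

lemma mem_pdesc_self {q : X → X} (x : X) : x ∈ PDesc q x := ⟨0, rfl⟩

lemma pdesc_of_q {q : X → X} {x b : X} (h : q x ∈ PDesc q b) : x ∈ PDesc q b := by
  obtain ⟨n, hn⟩ := h
  exact ⟨n + 1, by rw [Function.iterate_succ_apply]; exact hn⟩

lemma pdesc_trans {q : X → X} {x c b : X} (h1 : x ∈ PDesc q c) (h2 : c ∈ PDesc q b) :
    x ∈ PDesc q b := by
  obtain ⟨n, hn⟩ := h1; obtain ⟨m, hm⟩ := h2
  exact ⟨m + n, by rw [Function.iterate_add_apply, hn]; exact hm⟩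

lemma pdesc_step {q : X → X} {x b : X} (h : x ∈ PDesc q b) (hxb : x ≠ b) : q x ∈ PDesc q b := by
  obtain ⟨n, hn⟩ := h
  cases n with
  | zero => exact absurd hn hxb
  | succ n => exact ⟨n, by rw [← Function.iterate_succ_apply]; exact hn⟩

lemma pdepth_le_of_pdesc {q : X → X} {r : X} (hq : q r = r) (hwf : ∀ x, ∃ n, q^[n] x = r)
    {x b : X} (h : x ∈ PDesc q b) : pdepth hwf b ≤ pdepth hwf x := by
  obtain ⟨n, hn⟩ := h
  induction n generalizing x with
  | zero => rw [← hn]; rfl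
  | succ n ih =>
    by_cases hx : x = r
    · subst hx
      rw [iterate_r hq] at hn
      simp [← hn, pdepth_r]
    · rw [Function.iterate_succ_apply] at hn
      exact le_trans (ih hn) (le_of_lt (pdepth_q_lt hwf hx))

lemma pdepth_lt_of_pdesc {q : X → X} {r : X} (hq : q r = r) (hwf : ∀ x, ∃ n, q^[n] x = r)
    {x b : X} (h : x ∈ PDesc q b) (hxb : x ≠ b) : pdepth hwf b < pdepth hwf x := by
  have hx : x ≠ r := by
    rintro rfl
    obtain ⟨n, hn⟩ := h
    rw [iterate_r hq] at hn
    exact hxb hn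
  exact lt_of_le_of_lt (pdepth_le_of_pdesc hq hwf (pdesc_step h hxb)) (pdepth_q_lt hwf hx)

lemma q_not_pdesc {q : X → X} {r : X} (hq : q r = r) (hwf : ∀ x, ∃ n, q^[n] x = r)
    {b : X} (hb : b ≠ r) : q b ∉ PDesc q b := fun h =>
  absurd (pdepth_le_of_pdesc hq hwf h) (by simpa using pdepth_q_lt hwf hb)

lemma r_not_pdesc {q : X → X} {r : X} (hq : q r = r) {b : X} (hb : b ≠ r) :
    r ∉ PDesc q b := by
  rintro ⟨n, hn⟩
  rw [iterate_r hq] at hn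
  exact hb hn.symm

lemma pdesc_of_q_eq {q : X → X} {c b : X} (h : q c = b) : c ∈ PDesc q b := ⟨1, h⟩

lemma exists_child_of_pdesc {q : X → X} {x b : X} (h : x ∈ PDesc q b) (hxb : x ≠ b) :
    ∃ c, q c = b ∧ c ≠ b ∧ x ∈ PDesc q c := by
  have hex : ∃ n, q^[n] x = b := h
  have hspec : q^[Nat.find hex] x = b := Nat.find_spec hex
  have hn0 : Nat.find hex ≠ 0 := by
    intro h0
    rw [h0] at hspec
    exact hxb hspec
  refine ⟨q^[Nat.find hex - 1] x, ?_, ?_, ⟨Nat.find hex - 1, rfl⟩⟩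
  · rw [← Function.iterate_succ_apply' q (Nat.find hex - 1) x, Nat.succ_eq_add_one,
      Nat.sub_add_cancel (Nat.pos_of_ne_zero hn0)]
    exact hspec
  · intro hc
    exact Nat.find_min hex (by omega : Nat.find hex - 1 < Nat.find hex) hc

lemma pdesc_comparable {q : X → X} {x c c' : X} (h1 : x ∈ PDesc q c) (h2 : x ∈ PDesc q c') :
    c ∈ PDesc q c' ∨ c' ∈ PDesc q c := by
  obtain ⟨n, hn⟩ := h1; obtain ⟨m, hm⟩ := h2
  rcases le_total n m with h | h
  · left
    exact ⟨m - n, by rw [← hn, ← Function.iterate_add_apply, Nat.sub_add_cancel h]; exact hm⟩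
  · right
    exact ⟨n - m, by rw [← hm, ← Function.iterate_add_apply, Nat.sub_add_cancel h]; exact hn⟩

lemma pdesc_child_disjoint {q : X → X} {r : X} (hq : q r = r) (hwf : ∀ x, ∃ n, q^[n] x = r)
    {x c c' b : X} (hc : q c = b) (hcb : c ≠ b) (hc' : q c' = b)
    (hcb' : c' ≠ b) (hne : c ≠ c') (h1 : x ∈ PDesc q c) (h2 : x ∈ PDesc q c') : False := by
  have hcr : c ≠ r := by rintro rfl; rw [hq] at hc; exact hcb hc
  have hcr' : c' ≠ r := by rintro rfl; rw [hq] at hc'; exact hcb' hc'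
  have e1 := pdepth_q_eq hwf hcr
  have e2 := pdepth_q_eq hwf hcr'
  rw [hc] at e1; rw [hc'] at e2
  rcases pdesc_comparable h1 h2 with h | h
  · have := pdepth_lt_of_pdesc hq hwf h hne
    omega
  · have := pdepth_lt_of_pdesc hq hwf h (Ne.symm hne)
    omega

lemma pdepth_lt_card [Fintype X] {q : X → X} {r : X} (hwf : ∀ x, ∃ n, q^[n] x = r) (x : X) :
    pdepth hwf x < Fintype.card X := by
  have key : ∀ i j : ℕ, i < j → j ≤ pdepth hwf x → q^[i] x ≠ q^[j] x := by
    intro i j hlt hj hij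
    have hcyc : q^[pdepth hwf x - j + i] x = r := by
      calc q^[pdepth hwf x - j + i] x
          = q^[pdepth hwf x - j] (q^[i] x) := by
            rw [Function.iterate_add_apply]
        _ = q^[pdepth hwf x - j] (q^[j] x) := by rw [hij]
        _ = q^[pdepth hwf x - j + j] x := by rw [Function.iterate_add_apply]
        _ = r := by rw [Nat.sub_add_cancel hj]; exact iterate_pdepth hwf x
    have := pdepth_le hwf hcyc
    omega
  have hinj : Function.Injective (fun i : Fin (pdepth hwf x + 1) => q^[(i : ℕ)] x) := by
    intro i j hij
    rcases lt_trichotomy (i : ℕ) (j : ℕ) with h | h | h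
    · exact absurd hij (key _ _ h (by omega) )
    · exact Fin.ext h
    · exact absurd hij.symm (key _ _ h (by omega))
  have := Fintype.card_le_of_injective _ hinj
  simp only [Fintype.card_fin] at this
  omega

end MMW


open SimpleGraph
open scoped Classical

namespace MMW
variable {X : Type} {H : SimpleGraph X} {r : X} {q : X → X}

/-- a parent-pointer presentation of a tree -/
structure PTree (H : SimpleGraph X) (r : X) (q : X → X) : Prop where
  hq : q r = r
  hwf : ∀ x, ∃ n, q^[n] x = r
  hadj : ∀ x y, H.Adj x y ↔ x ≠ y ∧ (q x = y ∨ q y = x)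

lemma adj_q (h : PTree H r q) {x : X} (hx : x ≠ r) : H.Adj x (q x) :=
  (h.hadj x (q x)).mpr ⟨(q_ne_self h.hwf hx).symm, Or.inl rfl⟩

noncomputable def walkToRoot (h : PTree H r q) (x : X) : H.Walk x r :=
  if hx : x = r then (Walk.nil : H.Walk r r).copy hx.symm rfl
  else Walk.cons (adj_q h hx) (walkToRoot h (q x))
termination_by pdepth h.hwf x
decreasing_by exact pdepth_q_lt h.hwf hx

lemma mem_support_walkToRoot (h : PTree H r q) (x y : X) :
    y ∈ (walkToRoot h x).support ↔ x ∈ PDesc q y := by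
  suffices hsuf : ∀ n x, pdepth h.hwf x = n →
      (y ∈ (walkToRoot h x).support ↔ x ∈ PDesc q y) by
    exact hsuf _ x rfl
  intro n
  induction n using Nat.strong_induction_on with
  | _ n ih =>
  intro x hd
  rw [walkToRoot]
  split_ifs with hx
  · subst hx
    simp only [Walk.support_copy, Walk.support_nil, List.mem_singleton]
    constructor
    · rintro rfl; exact ⟨0, rfl⟩
    · rintro ⟨n, hn⟩; rw [iterate_r h.hq] at hn; exact hn.symm
  · rw [Walk.support_cons, List.mem_cons]
    rw [ih (pdepth h.hwf (q x)) (hd ▸ pdepth_q_lt h.hwf hx) _ rfl]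
    constructor
    · rintro (rfl | hy)
      · exact mem_pdesc_self _
      · exact pdesc_of_q hy
    · rintro ⟨n, hn⟩
      cases n with
      | zero => exact Or.inl hn.symm
      | succ n => exact Or.inr ⟨n, by rw [← Function.iterate_succ_apply]; exact hn⟩

lemma ptree_connected (h : PTree H r q) : H.Connected := by
  rw [connected_iff]
  exact ⟨fun x y => ((walkToRoot h x).append (walkToRoot h y).reverse).reachable, ⟨r⟩⟩

lemma adj_max_eq (h : PTree H r q) {m y : X} (hadjmy : H.Adj m y)
    (hle : pdepth h.hwf y ≤ pdepth h.hwf m) : q m = y := by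
  obtain ⟨hne, hor | hor⟩ := (h.hadj m y).mp hadjmy
  · exact hor
  · exfalso
    have hy : y ≠ r := by
      rintro rfl
      rw [h.hq] at hor
      exact hne hor.symm
    have := pdepth_q_lt h.hwf hy
    rw [hor] at this
    omega

lemma ptree_isAcyclic (h : PTree H r q) : H.IsAcyclic := by
  intro v c hc
  have hne : c.support.toFinset.Nonempty := ⟨v, by simp [Walk.start_mem_support]⟩
  obtain ⟨m, hm, hmax⟩ := Finset.exists_max_image c.support.toFinset (pdepth h.hwf) hne
  rw [List.mem_toFinset] at hm
  have hc' := hc.rotate hm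
  have hsupsub : ∀ y, y ∈ (c.rotate m hm).support → y ∈ c.support := by
    intro y hy
    have hrot := Walk.support_rotate c m hm
    rw [Walk.support_eq_cons (c.rotate m hm)] at hy
    rcases List.mem_cons.mp hy with rfl | hy
    · exact hm
    · have : y ∈ c.support.tail := hrot.mem_iff.mp hy
      exact List.mem_of_mem_tail this
  obtain ⟨s, hadj1, w1, hw1⟩ := Walk.not_nil_iff.mp hc'.not_nil
  rw [hw1] at hc'
  obtain ⟨hw1path, -⟩ := (Walk.cons_isCycle_iff w1 hadj1).mp hc'
  have hlen : 2 ≤ w1.length := by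
    have h3 := hc'.three_le_length
    rw [Walk.length_cons] at h3
    omega
  have hw1rev : w1.reverse.IsPath := hw1path.reverse
  have hrevnotnil : ¬ w1.reverse.Nil := by
    rw [Walk.nil_iff_length_eq, Walk.length_reverse]
    omega
  obtain ⟨b, hadj2, w2, hw2⟩ := Walk.not_nil_iff.mp hrevnotnil
  have hbs : b ≠ s := by
    rintro rfl
    rw [hw2] at hw1rev
    have hw2path : w2.IsPath := ((Walk.cons_isPath_iff hadj2 w2).mp hw1rev).1
    have hnil := Walk.isPath_iff_eq_nil.mp hw2path
    rw [hnil] at hw2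
    have hlen1 : w1.reverse.length = 1 := by rw [hw2]; simp
    rw [Walk.length_reverse] at hlen1
    omega
  have hsS : s ∈ c.support := by
    apply hsupsub; rw [hw1, Walk.support_cons]
    exact List.mem_cons_of_mem _ (Walk.start_mem_support w1)
  have hbS : b ∈ c.support := by
    apply hsupsub; rw [hw1, Walk.support_cons]
    apply List.mem_cons_of_mem
    have hmem : b ∈ w1.reverse.support := by
      rw [hw2, Walk.support_cons]; exact List.mem_cons_of_mem _ (Walk.start_mem_support w2)
    rw [Walk.support_reverse, List.mem_reverse] at hmem
    exact hmem
  have e1 : q m = s := adj_max_eq h hadj1 (hmax s (List.mem_toFinset.mpr hsS))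
  have e2 : q m = b := adj_max_eq h hadj2 (hmax b (List.mem_toFinset.mpr hbS))
  exact hbs (by rw [← e2, e1])

lemma ptree_isTree (h : PTree H r q) : H.IsTree := ⟨ptree_connected h, ptree_isAcyclic h⟩

lemma exists_walk_pdesc (h : PTree H r q) {b : X} (x : X) (hx : x ∈ PDesc q b) :
    ∃ w : H.Walk x b, ∀ y ∈ w.support, y ∈ PDesc q b := by
  suffices hsuf : ∀ n x, pdepth h.hwf x = n → x ∈ PDesc q b →
      ∃ w : H.Walk x b, ∀ y ∈ w.support, y ∈ PDesc q b by
    exact hsuf _ x rfl hx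
  clear hx x
  intro n
  induction n using Nat.strong_induction_on with
  | _ n ih =>
  intro x hd hx
  by_cases hxb : x = b
  · subst hxb
    exact ⟨Walk.nil, by simp [mem_pdesc_self]⟩
  · have hxr : x ≠ r := by
      intro hxr0
      by_cases hbr : b = r
      · exact hxb (hxr0.trans hbr.symm)
      · exact r_not_pdesc h.hq hbr (hxr0 ▸ hx)
    obtain ⟨w, hw⟩ := ih (pdepth h.hwf (q x)) (hd ▸ pdepth_q_lt h.hwf hxr) (q x) rfl
      (pdesc_step hx hxb)
    refine ⟨Walk.cons (adj_q h hxr) w, ?_⟩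
    intro y hy
    rw [Walk.support_cons, List.mem_cons] at hy
    rcases hy with rfl | hy
    · exact hx
    · exact hw y hy

lemma crossing_walk (h : PTree H r q) {b : X} : ∀ {x y : X} (w : H.Walk x y),
    x ∈ PDesc q b → y ∉ PDesc q b → b ∈ w.support ∧ q b ∈ w.support := by
  intro x y w
  induction w with
  | nil => intro hx hy; exact absurd hx hy
  | @cons u v z ha p ih =>
    intro hx hy
    by_cases hv : v ∈ PDesc q b
    · obtain ⟨h1, h2⟩ := ih hv hy
      exact ⟨List.mem_cons_of_mem _ h1, List.mem_cons_of_mem _ h2⟩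
    · obtain ⟨hne, hor | hor⟩ := (h.hadj u v).mp ha
      · by_cases hub : u = b
        · subst hub
          refine ⟨Walk.start_mem_support _, ?_⟩
          rw [Walk.support_cons]
          exact List.mem_cons_of_mem _ (hor ▸ Walk.start_mem_support p)
        · exact absurd (hor ▸ pdesc_step hx hub) hv
      · exact absurd (pdesc_of_q (hor.symm ▸ hx)) hv

lemma crossing_walk' (h : PTree H r q) {b x y : X} (w : H.Walk x y)
    (hx : x ∉ PDesc q b) (hy : y ∈ PDesc q b) : b ∈ w.support ∧ q b ∈ w.support := by
  have hcw := crossing_walk h w.reverse hy hx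
  rw [Walk.support_reverse, List.mem_reverse, List.mem_reverse] at hcw
  exact hcw

lemma exists_path_to_b (h : PTree H r q) {b x : X} (hb : b ≠ r) (hx : x ∈ PDesc q b) :
    ∃ p : H.Walk x b, p.IsPath ∧ q b ∉ p.support := by
  obtain ⟨w, hw⟩ := exists_walk_pdesc h x hx
  refine ⟨w.toPath.val, w.toPath.property, fun hmem => ?_⟩
  exact q_not_pdesc h.hq h.hwf hb (hw _ (Walk.support_toPath_subset w hmem))

lemma exists_path_to_parent (h : PTree H r q) {b x : X} (hb : b ≠ r) (hx : x ∉ PDesc q b) :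
    ∃ p : H.Walk x (q b), p.IsPath ∧ b ∉ p.support := by
  have hqb : q b ∉ PDesc q b := q_not_pdesc h.hq h.hwf hb
  set w := (walkToRoot h x).append (walkToRoot h (q b)).reverse with hw
  have hbw : b ∉ w.support := by
    rw [hw, Walk.mem_support_append_iff]
    rintro (hmem | hmem)
    · exact hx ((mem_support_walkToRoot h x b).mp hmem)
    · rw [Walk.support_reverse, List.mem_reverse] at hmem
      exact hqb ((mem_support_walkToRoot h (q b) b).mp hmem)
  exact ⟨w.toPath.val, w.toPath.property, fun hm => hbw (Walk.support_toPath_subset w hm)⟩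

/-- children of a node under a parent map -/
def PChildren (q : X → X) (x : X) : Set X := {c | q c = x ∧ c ≠ x}

lemma nbr_subset (h : PTree H r q) (x : X) :
    H.neighborSet x ⊆ PChildren q x ∪ {q x} := by
  intro y hy
  obtain ⟨hne, hor | hor⟩ := (h.hadj x y).mp hy
  · exact Or.inr (by simp [hor.symm])
  · exact Or.inl ⟨hor, Ne.symm hne⟩

lemma children_mem_nbr (h : PTree H r q) {x c : X} (hc : c ∈ PChildren q x) :
    c ∈ H.neighborSet x :=
  (h.hadj x c).mpr ⟨Ne.symm hc.2, Or.inr hc.1⟩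

lemma parent_mem_nbr (h : PTree H r q) {x : X} (hx : x ≠ r) : q x ∈ H.neighborSet x :=
  adj_q h hx

lemma parent_not_child (h : PTree H r q) {x : X} (hx : x ≠ r) : q x ∉ PChildren q x := by
  rintro ⟨h1, h2⟩
  by_cases hqx : q x = r
  · rw [hqx, h.hq] at h1
    exact hx h1.symm
  · have e1 := pdepth_q_eq h.hwf hx
    have e2 := pdepth_q_eq h.hwf hqx
    rw [h1] at e2
    omega

lemma children_ncard_lt [Fintype X] (h : PTree H r q) {x : X} (hx : x ≠ r) :
    (PChildren q x).ncard + 1 ≤ (H.neighborSet x).ncard := by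
  have hsub : insert (q x) (PChildren q x) ⊆ H.neighborSet x := by
    rintro y (rfl | hy)
    · exact parent_mem_nbr h hx
    · exact children_mem_nbr h hy
  have hins : (insert (q x) (PChildren q x)).ncard = (PChildren q x).ncard + 1 :=
    Set.ncard_insert_of_notMem (parent_not_child h hx) (Set.toFinite _)
  rw [← hins]
  exact Set.ncard_le_ncard hsub (Set.toFinite _)

lemma nbr_ncard_le [Fintype X] (h : PTree H r q) (x : X) :
    (H.neighborSet x).ncard ≤ (PChildren q x).ncard + 1 := by
  calc (H.neighborSet x).ncard ≤ (PChildren q x ∪ {q x}).ncard :=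
        Set.ncard_le_ncard (nbr_subset h x) (Set.toFinite _)
    _ ≤ (PChildren q x).ncard + ({q x} : Set X).ncard := Set.ncard_union_le _ _
    _ = (PChildren q x).ncard + 1 := by rw [Set.ncard_singleton]

lemma two_le_nbr_parent_child [Fintype X] (h : PTree H r q) {x c : X} (hx : x ≠ r)
    (hc : c ∈ PChildren q x) : 2 ≤ (H.neighborSet x).ncard := by
  have hcq : c ≠ q x := fun hh => parent_not_child h hx (hh ▸ hc)
  have hsub : ({c, q x} : Set X) ⊆ H.neighborSet x := by
    rintro y (rfl | rfl)
    · exact children_mem_nbr h hc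
    · exact parent_mem_nbr h hx
  calc 2 = ({c, q x} : Set X).ncard := (Set.ncard_pair hcq).symm
    _ ≤ _ := Set.ncard_le_ncard hsub (Set.toFinite _)

lemma two_le_nbr_two_children [Fintype X] (h : PTree H r q) {x c c' : X}
    (hc : c ∈ PChildren q x) (hc' : c' ∈ PChildren q x) (hne : c ≠ c') :
    2 ≤ (H.neighborSet x).ncard := by
  have hsub : ({c, c'} : Set X) ⊆ H.neighborSet x := by
    rintro y (rfl | rfl)
    · exact children_mem_nbr h hc
    · exact children_mem_nbr h hc'
  calc 2 = ({c, c'} : Set X).ncard := (Set.ncard_pair hne).symm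
    _ ≤ _ := Set.ncard_le_ncard hsub (Set.toFinite _)

lemma nbr_eq_parent (h : PTree H r q) {x : X} (hx : x ≠ r) (hnc : PChildren q x = ∅) :
    H.neighborSet x = {q x} := by
  apply Set.Subset.antisymm
  · intro y hy
    rcases nbr_subset h x hy with hy' | hy'
    · rw [hnc] at hy'; exact absurd hy' (Set.notMem_empty y)
    · exact hy'
  · rintro y rfl
    exact parent_mem_nbr h hx

end MMW


open SimpleGraph
open scoped Classical

namespace MMW
variable {X : Type} {H : SimpleGraph X}

noncomputable def tpath (hU : ∀ v w : X, ∃! p : H.Walk v w, p.IsPath) (x r : X) :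
    H.Walk x r := (hU x r).choose

lemma tpath_isPath (hU : ∀ v w : X, ∃! p : H.Walk v w, p.IsPath) (x r : X) :
    (tpath hU x r).IsPath := (hU x r).choose_spec.1

lemma tpath_unique (hU : ∀ v w : X, ∃! p : H.Walk v w, p.IsPath) {x r : X}
    (p : H.Walk x r) (hp : p.IsPath) : p = tpath hU x r := (hU x r).choose_spec.2 p hp

noncomputable def tparent (hU : ∀ v w : X, ∃! p : H.Walk v w, p.IsPath) (r : X) (x : X) : X :=
  (tpath hU x r).getVert 1

lemma tpath_r (hU : ∀ v w : X, ∃! p : H.Walk v w, p.IsPath) (r : X) :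
    tpath hU r r = Walk.nil := (tpath_unique hU Walk.nil (Walk.IsPath.nil)).symm

lemma tparent_r (hU : ∀ v w : X, ∃! p : H.Walk v w, p.IsPath) (r : X) :
    tparent hU r r = r := by
  rw [tparent, tpath_r]
  rfl

lemma tpath_not_nil (hU : ∀ v w : X, ∃! p : H.Walk v w, p.IsPath) {r x : X} (hx : x ≠ r) :
    ¬ (tpath hU x r).Nil := Walk.not_nil_of_ne hx

lemma tparent_adj (hU : ∀ v w : X, ∃! p : H.Walk v w, p.IsPath) {r x : X} (hx : x ≠ r) :
    H.Adj x (tparent hU r x) := Walk.adj_snd (tpath_not_nil hU hx)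

lemma tpath_tail (hU : ∀ v w : X, ∃! p : H.Walk v w, p.IsPath) {r x : X} (hx : x ≠ r) :
    (tpath hU x r).tail.copy rfl rfl = tpath hU (tparent hU r x) r := by
  apply tpath_unique
  simp only [Walk.isPath_copy]
  exact (tpath_isPath hU x r).tail

lemma tparent_length (hU : ∀ v w : X, ∃! p : H.Walk v w, p.IsPath) {r x : X} (hx : x ≠ r) :
    (tpath hU (tparent hU r x) r).length + 1 = (tpath hU x r).length := by
  have h1 := congrArg Walk.length (tpath_tail hU hx)
  rw [Walk.length_copy] at h1
  exact (congrArg (· + 1) h1).symm.trans (Walk.length_tail_add_one (tpath_not_nil hU hx))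

lemma tparent_wf (hU : ∀ v w : X, ∃! p : H.Walk v w, p.IsPath) (r : X) :
    ∀ x, ∃ n, (tparent hU r)^[n] x = r := by
  suffices hsuf : ∀ n x, (tpath hU x r).length = n → ∃ m, (tparent hU r)^[m] x = r by
    intro x; exact hsuf _ x rfl
  intro n
  induction n using Nat.strong_induction_on with
  | _ n ih =>
  intro x hd
  by_cases hx : x = r
  · exact ⟨0, hx⟩
  · obtain ⟨m, hm⟩ := ih (tpath hU (tparent hU r x) r).length
      (by rw [← hd, ← tparent_length hU hx]; omega) (tparent hU r x) rfl
    exact ⟨m + 1, by rw [Function.iterate_add_apply]; simpa using hm⟩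

lemma tparent_of_adj (hU : ∀ v w : X, ∃! p : H.Walk v w, p.IsPath) {r x y : X}
    (h : H.Adj x y) : tparent hU r x = y ∨ tparent hU r y = x := by
  by_cases hmem : x ∈ (tpath hU y r).support
  · -- then y ∉ (tpath hU x r).support, and we use the symmetric argument
    right
    have hdrop : (tpath hU y r).dropUntil x hmem = tpath hU x r :=
      tpath_unique hU _ ((tpath_isPath hU y r).dropUntil hmem)
    have hynotmem : y ∉ (tpath hU x r).support := by
      intro hy
      rw [← hdrop] at hy
      have hnd := (tpath_isPath hU y r).support_nodup
      have hspec := Walk.take_spec (tpath hU y r) hmem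
      rw [← hspec, Walk.support_append, List.nodup_append] at hnd
      have hy' : y ∈ ((tpath hU y r).dropUntil x hmem).support.tail := by
        have hsupp := Walk.support_eq_cons ((tpath hU y r).dropUntil x hmem)
        rw [hsupp] at hy
        rcases List.mem_cons.mp hy with rfl | hy2
        · exact absurd rfl h.ne
        · exact hy2
      exact hnd.2.2 _ (Walk.start_mem_support _) _ hy' rfl
    have : Walk.cons h.symm (tpath hU x r) = tpath hU y r := by
      apply tpath_unique
      rw [Walk.cons_isPath_iff]
      exact ⟨tpath_isPath hU x r, hynotmem⟩
    rw [tparent, ← this, Walk.getVert_cons_succ, Walk.getVert_zero]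
  · left
    have : Walk.cons h (tpath hU y r) = tpath hU x r := by
      apply tpath_unique
      rw [Walk.cons_isPath_iff]
      exact ⟨tpath_isPath hU y r, hmem⟩
    rw [tparent, ← this, Walk.getVert_cons_succ, Walk.getVert_zero]

lemma tparent_hadj (hU : ∀ v w : X, ∃! p : H.Walk v w, p.IsPath) (r : X) (x y : X) :
    H.Adj x y ↔ x ≠ y ∧ (tparent hU r x = y ∨ tparent hU r y = x) := by
  constructor
  · intro h
    exact ⟨h.ne, tparent_of_adj hU h⟩
  · rintro ⟨hne, hor | hor⟩
    · have hx : x ≠ r := by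
        intro hx0
        rw [hx0, tparent_r] at hor
        exact hne (hx0.trans hor)
      exact hor ▸ tparent_adj hU hx
    · have hy : y ≠ r := by
        intro hy0
        rw [hy0, tparent_r] at hor
        exact hne (hor.symm.trans hy0.symm)
      exact (hor ▸ tparent_adj hU hy).symm

lemma tparent_ptree (hU : ∀ v w : X, ∃! p : H.Walk v w, p.IsPath) (r : X) :
    PTree H r (tparent hU r) :=
  ⟨tparent_r hU r, tparent_wf hU r, tparent_hadj hU r⟩

end MMW


open SimpleGraph
open scoped Classical

namespace MMW

lemma snoc_injective {α : Type} (x : α) : Function.Injective (fun a : List α => a ++ [x]) :=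
  fun a b h => List.append_cancel_right h

lemma snoc_suffix_snoc {α : Type} {a b : List α} {x y : α} :
    (a ++ [x]) <:+ (b ++ [y]) ↔ (x = y ∧ a <:+ b) := by
  constructor
  · rintro ⟨c, hc⟩
    rw [← List.append_assoc] at hc
    have hx : x = y := by
      have h2 := congrArg List.getLast? hc
      rw [List.getLast?_concat, List.getLast?_concat] at h2
      exact Option.some_injective _ h2
    subst hx
    exact ⟨rfl, c, List.append_cancel_right hc⟩
  · rintro ⟨rfl, c, rfl⟩
    exact ⟨c, by rw [← List.append_assoc]⟩

inductive MBT (V : Type) where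
  | lf (v : V)
  | nd (l r : MBT V)

namespace MBT
variable {V : Type}

def leafPos : MBT V → List (List Bool × V)
  | lf v => [([], v)]
  | nd l r => (l.leafPos.map fun p => (p.1 ++ [false], p.2))
      ++ (r.leafPos.map fun p => (p.1 ++ [true], p.2))

def posL : MBT V → List (List Bool)
  | lf _ => [[]]
  | nd l r => [] :: ((l.posL.map (· ++ [false])) ++ (r.posL.map (· ++ [true])))

def labels (t : MBT V) : List V := t.leafPos.map Prod.snd

def cluster (t : MBT V) (x : List Bool) : Set V := {g | ∃ y, (y, g) ∈ t.leafPos ∧ x <:+ y}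

lemma nil_mem_posL (t : MBT V) : [] ∈ t.posL := by cases t <;> simp [posL]

lemma mem_posL_nd {l r : MBT V} {x : List Bool} :
    x ∈ (nd l r).posL ↔
      x = [] ∨ (∃ y ∈ l.posL, x = y ++ [false]) ∨ (∃ y ∈ r.posL, x = y ++ [true]) := by
  simp only [posL, List.mem_cons, List.mem_append, List.mem_map]
  constructor
  · rintro (h | ⟨y, hy, rfl⟩ | ⟨y, hy, rfl⟩)
    · exact Or.inl h
    · exact Or.inr (Or.inl ⟨y, hy, rfl⟩)
    · exact Or.inr (Or.inr ⟨y, hy, rfl⟩)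
  · rintro (h | ⟨y, hy, rfl⟩ | ⟨y, hy, rfl⟩)
    · exact Or.inl h
    · exact Or.inr (Or.inl ⟨y, hy, rfl⟩)
    · exact Or.inr (Or.inr ⟨y, hy, rfl⟩)

lemma mem_leafPos_nd {l r : MBT V} {y : List Bool} {g : V} :
    (y, g) ∈ (nd l r).leafPos ↔
      (∃ z, (z, g) ∈ l.leafPos ∧ y = z ++ [false]) ∨
      (∃ z, (z, g) ∈ r.leafPos ∧ y = z ++ [true]) := by
  rw [leafPos, List.mem_append, List.mem_map, List.mem_map]
  constructor
  · rintro (⟨⟨z, g'⟩, hp, hpe⟩ | ⟨⟨z, g'⟩, hp, hpe⟩)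
    · simp only [Prod.mk.injEq] at hpe
      obtain ⟨h1, rfl⟩ := hpe
      exact Or.inl ⟨z, hp, h1.symm⟩
    · simp only [Prod.mk.injEq] at hpe
      obtain ⟨h1, rfl⟩ := hpe
      exact Or.inr ⟨z, hp, h1.symm⟩
  · rintro (⟨z, hz, rfl⟩ | ⟨z, hz, rfl⟩)
    · exact Or.inl ⟨(z, g), hz, rfl⟩
    · exact Or.inr ⟨(z, g), hz, rfl⟩

lemma leafPos_mem_posL {t : MBT V} {y : List Bool} {g : V} (h : (y, g) ∈ t.leafPos) :
    y ∈ t.posL := by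
  induction t generalizing y with
  | lf v =>
    simp only [leafPos, List.mem_singleton, Prod.mk.injEq] at h
    simp [posL, h.1]
  | nd l r ihl ihr =>
    rw [mem_leafPos_nd] at h
    rw [mem_posL_nd]
    rcases h with ⟨z, hz, rfl⟩ | ⟨z, hz, rfl⟩
    · exact Or.inr (Or.inl ⟨z, ihl hz, rfl⟩)
    · exact Or.inr (Or.inr ⟨z, ihr hz, rfl⟩)

lemma tail_mem_posL : ∀ {t : MBT V} {x : List Bool}, x ∈ t.posL → x.tail ∈ t.posL := by
  intro t
  induction t with
  | lf v =>
    intro x h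
    simp only [posL, List.mem_singleton] at h
    simp [posL, h]
  | nd l r ihl ihr =>
    intro x h
    rcases mem_posL_nd.mp h with rfl | ⟨y, hy, rfl⟩ | ⟨y, hy, rfl⟩
    · exact nil_mem_posL _
    · cases y with
      | nil => simpa using nil_mem_posL (nd l r)
      | cons a y' =>
        rw [List.cons_append, List.tail_cons]
        exact mem_posL_nd.mpr (Or.inr (Or.inl ⟨y', by simpa using ihl hy, rfl⟩))
    · cases y with
      | nil => simpa using nil_mem_posL (nd l r)
      | cons a y' =>
        rw [List.cons_append, List.tail_cons]
        exact mem_posL_nd.mpr (Or.inr (Or.inr ⟨y', by simpa using ihr hy, rfl⟩))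

lemma cluster_nil (t : MBT V) : t.cluster [] = {g | g ∈ t.labels} := by
  ext g
  simp only [cluster, labels, Set.mem_setOf_eq, List.mem_map]
  constructor
  · rintro ⟨y, hy, -⟩
    exact ⟨(y, g), hy, rfl⟩
  · rintro ⟨⟨y, g'⟩, hy, hge⟩
    cases hge
    exact ⟨y, hy, List.nil_suffix⟩

lemma cluster_false (l r : MBT V) (x : List Bool) :
    (nd l r).cluster (x ++ [false]) = l.cluster x := by
  ext g
  simp only [cluster, Set.mem_setOf_eq]
  constructor
  · rintro ⟨y, hy, hsuf⟩
    rcases mem_leafPos_nd.mp hy with ⟨z, hz, rfl⟩ | ⟨z, hz, rfl⟩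
    · exact ⟨z, hz, (snoc_suffix_snoc.mp hsuf).2⟩
    · exact absurd (snoc_suffix_snoc.mp hsuf).1 (by simp)
  · rintro ⟨y, hy, hsuf⟩
    exact ⟨y ++ [false], mem_leafPos_nd.mpr (Or.inl ⟨y, hy, rfl⟩),
      snoc_suffix_snoc.mpr ⟨rfl, hsuf⟩⟩

lemma cluster_true (l r : MBT V) (x : List Bool) :
    (nd l r).cluster (x ++ [true]) = r.cluster x := by
  ext g
  simp only [cluster, Set.mem_setOf_eq]
  constructor
  · rintro ⟨y, hy, hsuf⟩
    rcases mem_leafPos_nd.mp hy with ⟨z, hz, rfl⟩ | ⟨z, hz, rfl⟩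
    · exact absurd (snoc_suffix_snoc.mp hsuf).1 (by simp)
    · exact ⟨z, hz, (snoc_suffix_snoc.mp hsuf).2⟩
  · rintro ⟨y, hy, hsuf⟩
    exact ⟨y ++ [true], mem_leafPos_nd.mpr (Or.inr ⟨y, hy, rfl⟩),
      snoc_suffix_snoc.mpr ⟨rfl, hsuf⟩⟩

lemma labels_lf (v : V) : (lf v).labels = [v] := rfl

lemma labels_nd (l r : MBT V) : (nd l r).labels = l.labels ++ r.labels := by
  simp only [labels, leafPos, List.map_append, List.map_map]
  rfl

lemma leafPos_fst_nodup (t : MBT V) : (t.leafPos.map Prod.fst).Nodup := by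
  induction t with
  | lf v => simp [leafPos]
  | nd l r ihl ihr =>
    rw [leafPos, List.map_append, List.nodup_append]
    have e1 : ((l.leafPos.map fun p => (p.1 ++ [false], p.2)).map Prod.fst)
        = (l.leafPos.map Prod.fst).map (· ++ [false]) := by
      simp only [List.map_map]
      rfl
    have e2 : ((r.leafPos.map fun p => (p.1 ++ [true], p.2)).map Prod.fst)
        = (r.leafPos.map Prod.fst).map (· ++ [true]) := by
      simp only [List.map_map]
      rfl
    rw [e1, e2]
    refine ⟨ihl.map (snoc_injective false), ihr.map (snoc_injective true), ?_⟩
    intro a ha b ha'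
    rw [List.mem_map] at ha ha'
    obtain ⟨y, -, rfl⟩ := ha
    obtain ⟨z, -, rfl⟩ := ha'
    intro hz
    have := congrArg List.getLast? hz
    rw [List.getLast?_concat, List.getLast?_concat] at this
    simp at this

lemma no_child_of_leafPos {t : MBT V} {y : List Bool} {g : V} (h : (y, g) ∈ t.leafPos)
    (b : Bool) : (b :: y) ∉ t.posL := by
  induction t generalizing y with
  | lf v =>
    simp [posL]
  | nd l r ihl ihr =>
    intro hmem
    rcases mem_leafPos_nd.mp h with ⟨z, hz, rfl⟩ | ⟨z, hz, rfl⟩ <;>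
      rcases mem_posL_nd.mp hmem with h0 | ⟨w, hw, hwe⟩ | ⟨w, hw, hwe⟩
    · exact absurd h0 (by simp)
    · rw [← List.cons_append] at hwe
      rw [← List.append_cancel_right hwe] at hw
      exact ihl hz hw
    · rw [← List.cons_append] at hwe
      have := congrArg List.getLast? hwe
      rw [List.getLast?_concat, List.getLast?_concat] at this
      simp at this
    · exact absurd h0 (by simp)
    · rw [← List.cons_append] at hwe
      have := congrArg List.getLast? hwe
      rw [List.getLast?_concat, List.getLast?_concat] at this
      simp at this
    · rw [← List.cons_append] at hwe
      rw [← List.append_cancel_right hwe] at hw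
      exact ihr hz hw

lemma exists_label_of_no_child {t : MBT V} {x : List Bool} (hx : x ∈ t.posL)
    (h : ∀ b : Bool, (b :: x) ∉ t.posL) : ∃ g, (x, g) ∈ t.leafPos := by
  induction t generalizing x with
  | lf v =>
    simp only [posL, List.mem_singleton] at hx
    exact ⟨v, by simp [leafPos, hx]⟩
  | nd l r ihl ihr =>
    rcases mem_posL_nd.mp hx with rfl | ⟨y, hy, rfl⟩ | ⟨y, hy, rfl⟩
    · exfalso
      apply h false
      exact mem_posL_nd.mpr (Or.inr (Or.inl ⟨[], nil_mem_posL l, rfl⟩))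
    · have hnc : ∀ b : Bool, (b :: y) ∉ l.posL := by
        intro b hb
        apply h b
        rw [← List.cons_append]
        exact mem_posL_nd.mpr (Or.inr (Or.inl ⟨b :: y, hb, rfl⟩))
      obtain ⟨g, hg⟩ := ihl hy hnc
      exact ⟨g, mem_leafPos_nd.mpr (Or.inl ⟨y, hg, rfl⟩)⟩
    · have hnc : ∀ b : Bool, (b :: y) ∉ r.posL := by
        intro b hb
        apply h b
        rw [← List.cons_append]
        exact mem_posL_nd.mpr (Or.inr (Or.inr ⟨b :: y, hb, rfl⟩))
      obtain ⟨g, hg⟩ := ihr hy hnc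
      exact ⟨g, mem_leafPos_nd.mpr (Or.inr ⟨y, hg, rfl⟩)⟩

lemma leafPos_ne_nil_of_nd {l r : MBT V} {g : V} : ([], g) ∉ (nd l r).leafPos := by
  intro h
  rcases mem_leafPos_nd.mp h with ⟨z, -, hz⟩ | ⟨z, -, hz⟩ <;> simp at hz

end MBT
end MMW


open SimpleGraph
open scoped Classical

namespace MMW
namespace MBT
variable {V : Type}

def posT (t : MBT V) : Type := {x : List Bool // x ∈ t.posL}

noncomputable instance (t : MBT V) : Fintype t.posT :=
  inferInstanceAs (Fintype {x : List Bool // x ∈ t.posL})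

def proot (t : MBT V) : t.posT := ⟨[], nil_mem_posL t⟩

def pq (t : MBT V) : t.posT → t.posT := fun x => ⟨x.1.tail, tail_mem_posL x.2⟩

def pgraph (t : MBT V) : SimpleGraph t.posT where
  Adj x y := x ≠ y ∧ (x.1.tail = y.1 ∨ y.1.tail = x.1)
  symm := ⟨by
    rintro x y ⟨h1, h2⟩
    exact ⟨h1.symm, h2.symm⟩⟩
  loopless := ⟨fun x h => h.1 rfl⟩

lemma pq_iterate (t : MBT V) (x : t.posT) (n : ℕ) : ((pq t)^[n] x).1 = x.1.drop n := by
  induction n with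
  | zero => simp
  | succ n ih =>
    rw [Function.iterate_succ_apply']
    show ((pq t)^[n] x).1.tail = x.1.drop (n + 1)
    rw [ih, List.tail_drop]

lemma ptree_pgraph (t : MBT V) : PTree (pgraph t) (proot t) (pq t) where
  hq := Subtype.ext (by simp [pq, proot])
  hwf := fun x => ⟨x.1.length, Subtype.ext (by rw [pq_iterate]; exact List.drop_length)⟩
  hadj := fun x y => by
    constructor
    · rintro ⟨h1, h2 | h2⟩
      · exact ⟨h1, Or.inl (Subtype.ext h2)⟩
      · exact ⟨h1, Or.inr (Subtype.ext h2)⟩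
    · rintro ⟨h1, h2 | h2⟩
      · exact ⟨h1, Or.inl (congrArg Subtype.val h2)⟩
      · exact ⟨h1, Or.inr (congrArg Subtype.val h2)⟩

lemma pdesc_iff_suffix (t : MBT V) (x b : t.posT) :
    x ∈ PDesc (pq t) b ↔ b.1 <:+ x.1 := by
  constructor
  · rintro ⟨n, hn⟩
    have := congrArg Subtype.val hn
    rw [pq_iterate] at this
    exact this ▸ List.drop_suffix n x.1
  · intro hs
    rw [List.suffix_iff_eq_drop] at hs
    exact ⟨x.1.length - b.1.length, Subtype.ext (by rw [pq_iterate]; exact hs.symm)⟩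

lemma mem_pchildren_iff (t : MBT V) (x c : t.posT) :
    c ∈ PChildren (pq t) x ↔ ∃ b : Bool, c.1 = b :: x.1 := by
  constructor
  · rintro ⟨h1, h2⟩
    have h1' : c.1.tail = x.1 := congrArg Subtype.val h1
    cases hc : c.1 with
    | nil =>
      exfalso
      apply h2
      apply Subtype.ext
      rw [hc] at h1'
      simp at h1'
      rw [hc, ← h1']
    | cons a l =>
      rw [hc] at h1'
      simp at h1'
      exact ⟨a, by rw [h1']⟩
  · rintro ⟨b, hb⟩
    constructor
    · exact Subtype.ext (by rw [pq]; simp [hb])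
    · intro hcx
      rw [hcx] at hb
      exact (List.cons_ne_self b x.1) hb.symm

lemma ncard_le_one_of_subsingleton {α : Type} (s : Set α) (h : s.Subsingleton) :
    s.ncard ≤ 1 := by
  rcases h.eq_empty_or_singleton with rfl | ⟨a, rfl⟩ <;> simp

lemma pchildren_ncard_le_two (t : MBT V) (x : t.posT) :
    (PChildren (pq t) x).ncard ≤ 2 := by
  have hsub : PChildren (pq t) x ⊆
      {c : t.posT | c.1 = false :: x.1} ∪ {c : t.posT | c.1 = true :: x.1} := by
    intro c hc
    obtain ⟨b, hb⟩ := (mem_pchildren_iff t x c).mp hc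
    cases b
    · exact Or.inl hb
    · exact Or.inr hb
  calc (PChildren (pq t) x).ncard
      ≤ ({c : t.posT | c.1 = false :: x.1} ∪ {c : t.posT | c.1 = true :: x.1}).ncard :=
        Set.ncard_le_ncard hsub (Set.toFinite _)
    _ ≤ ({c : t.posT | c.1 = false :: x.1}).ncard + ({c : t.posT | c.1 = true :: x.1}).ncard :=
        Set.ncard_union_le _ _
    _ ≤ 1 + 1 := by
        gcongr
        · exact ncard_le_one_of_subsingleton _
            (fun a ha b hb => Subtype.ext (ha.trans hb.symm))
        · exact ncard_le_one_of_subsingleton _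
            (fun a ha b hb => Subtype.ext (ha.trans hb.symm))
    _ = 2 := rfl

lemma pgraph_deg_le (t : MBT V) (x : t.posT) : ((pgraph t).neighborSet x).ncard ≤ 3 := by
  have h1 := nbr_ncard_le (ptree_pgraph t) x
  have h2 := pchildren_ncard_le_two t x
  omega

lemma pgraph_leaf_iff (l r : MBT V) (x : (nd l r).posT) :
    (((pgraph (nd l r)).neighborSet x).ncard = 1) ↔ ∃ g, (x.1, g) ∈ (nd l r).leafPos := by
  constructor
  · intro hx
    have hxroot : x ≠ proot (nd l r) := by
      rintro rfl
      have hc0 : (⟨[false], mem_posL_nd.mpr (Or.inr (Or.inl ⟨[], nil_mem_posL l, rfl⟩))⟩ :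
          (nd l r).posT) ∈ PChildren (pq (nd l r)) (proot (nd l r)) := by
        apply (mem_pchildren_iff _ _ _).mpr
        exact ⟨false, rfl⟩
      have hc1 : (⟨[true], mem_posL_nd.mpr (Or.inr (Or.inr ⟨[], nil_mem_posL r, rfl⟩))⟩ :
          (nd l r).posT) ∈ PChildren (pq (nd l r)) (proot (nd l r)) := by
        apply (mem_pchildren_iff _ _ _).mpr
        exact ⟨true, rfl⟩
      have := two_le_nbr_two_children (ptree_pgraph (nd l r)) hc0 hc1
        (by intro hh; exact (by simpa using congrArg Subtype.val hh))
      omega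
    have hnc : PChildren (pq (nd l r)) x = ∅ := by
      by_contra hne
      obtain ⟨c, hc⟩ := Set.nonempty_iff_ne_empty.mpr hne
      have := two_le_nbr_parent_child (ptree_pgraph (nd l r)) hxroot hc
      omega
    have hnochild : ∀ b : Bool, (b :: x.1) ∉ (nd l r).posL := by
      intro b hb
      have : (⟨b :: x.1, hb⟩ : (nd l r).posT) ∈ PChildren (pq (nd l r)) x :=
        (mem_pchildren_iff _ _ _).mpr ⟨b, rfl⟩
      rw [hnc] at this
      exact this
    exact exists_label_of_no_child x.2 hnochild
  · rintro ⟨g, hg⟩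
    have hxroot : x ≠ proot (nd l r) := by
      rintro rfl
      exact leafPos_ne_nil_of_nd hg
    have hnc : PChildren (pq (nd l r)) x = ∅ := by
      rw [Set.eq_empty_iff_forall_notMem]
      intro c hc
      obtain ⟨b, hb⟩ := (mem_pchildren_iff _ _ _).mp hc
      exact no_child_of_leafPos hg b (hb ▸ c.2)
    rw [nbr_eq_parent (ptree_pgraph (nd l r)) hxroot hnc]
    exact Set.ncard_singleton _

noncomputable def lmap (l r : MBT V)
    (x : {x : (nd l r).posT // ((pgraph (nd l r)).neighborSet x).ncard = 1}) : V :=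
  Classical.choose ((pgraph_leaf_iff l r x.1).mp x.2)

lemma lmap_spec (l r : MBT V)
    (x : {x : (nd l r).posT // ((pgraph (nd l r)).neighborSet x).ncard = 1}) :
    (x.1.1, lmap l r x) ∈ (nd l r).leafPos :=
  Classical.choose_spec ((pgraph_leaf_iff l r x.1).mp x.2)

lemma lmap_bij (l r : MBT V) (hnodup : (nd l r).labels.Nodup)
    (huniv : ∀ g : V, g ∈ (nd l r).labels) : Function.Bijective (lmap l r) := by
  constructor
  · intro x y hxy
    have h1 := lmap_spec l r x
    have h2 := lmap_spec l r y
    rw [hxy] at h1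
    have heq := List.inj_on_of_nodup_map (f := Prod.snd) hnodup h1 h2 rfl
    apply Subtype.ext
    apply Subtype.ext
    exact congrArg Prod.fst heq
  · intro g
    obtain ⟨⟨y, g'⟩, hy, hg⟩ := List.mem_map.mp (huniv g)
    have hg' : g' = g := hg
    subst hg'
    have hyp : y ∈ (nd l r).posL := leafPos_mem_posL hy
    have hleaf : ((pgraph (nd l r)).neighborSet ⟨y, hyp⟩).ncard = 1 :=
      (pgraph_leaf_iff l r ⟨y, hyp⟩).mpr ⟨g', hy⟩
    refine ⟨⟨⟨y, hyp⟩, hleaf⟩, ?_⟩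
    have h1 := lmap_spec l r ⟨⟨y, hyp⟩, hleaf⟩
    have heq := List.inj_on_of_nodup_map (f := Prod.fst) (leafPos_fst_nodup (nd l r)) h1 hy rfl
    exact congrArg Prod.snd heq

lemma side_spec (t : MBT V) {b : t.posT} (hb : b ≠ proot t) (x : t.posT) :
    (∃ p : (pgraph t).Walk x b, p.IsPath ∧ (pq t b) ∉ p.support) ↔ x ∈ PDesc (pq t) b := by
  constructor
  · rintro ⟨p, _, hqb⟩
    by_contra hx
    exact hqb (crossing_walk' (ptree_pgraph t) p hx (mem_pdesc_self b)).2
  · intro hx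
    exact exists_path_to_b (ptree_pgraph t) hb hx

lemma side_spec' (t : MBT V) {b : t.posT} (hb : b ≠ proot t) (x : t.posT) :
    (∃ p : (pgraph t).Walk x (pq t b), p.IsPath ∧ b ∉ p.support) ↔ x ∉ PDesc (pq t) b := by
  constructor
  · rintro ⟨p, _, hbp⟩ hx
    exact hbp (crossing_walk (ptree_pgraph t) p hx
      (q_not_pdesc (ptree_pgraph t).hq (ptree_pgraph t).hwf hb)).1
  · intro hx
    exact exists_path_to_parent (ptree_pgraph t) hb hx

lemma pgraph_adj_cases (t : MBT V) {a b : t.posT} (h : (pgraph t).Adj a b) :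
    (b ≠ proot t ∧ pq t b = a) ∨ (a ≠ proot t ∧ pq t a = b) := by
  obtain ⟨hne, h1 | h1⟩ := h
  · right
    constructor
    · rintro rfl
      apply hne
      apply Subtype.ext
      have : (proot t).1.tail = b.1 := h1
      simpa [proot] using this.symm
    · exact Subtype.ext h1
  · left
    constructor
    · rintro rfl
      apply hne
      apply Subtype.ext
      have : (proot t).1.tail = a.1 := h1
      simpa [proot] using this
    · exact Subtype.ext h1

end MBT
end MMW


open SimpleGraph
open scoped Classical

namespace MMW
variable {V N : Type}

/-- the set of `u` whose chosen edge lies fully below `b` -/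
def InsideSet (q : N → N) (aa bb : V → N) (b : N) : Set V :=
  {u | aa u ∈ PDesc q b ∧ bb u ∈ PDesc q b}

/-- vertices whose chosen edge is exactly `{b, c}` -/
def PcSet (aa bb : V → N) (b c : N) : Set V :=
  {u | (aa u = b ∧ bb u = c) ∨ (bb u = b ∧ aa u = c)}

section
variable {G : SimpleGraph V} {T : SimpleGraph N} {S : V → Set N} {q : N → N} {r : N}
  {aa bb : V → N} {k : ℕ}

lemma good_of_form [Fintype V] (h : PTree T r q)
    (haa : ∀ u, aa u ∈ S u) (hbb : ∀ u, bb u ∈ S u)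
    (hsubpath : ∀ u, ∀ a ∈ S u, ∀ b ∈ S u,
      ∃ p : T.Walk a b, p.IsPath ∧ ∀ c ∈ p.support, c ∈ S u)
    (hGadj : ∀ ⦃u v : V⦄, G.Adj u v → (S u ∩ S v).Nonempty)
    (hcount : ∀ ⦃a b : N⦄, T.Adj a b → {u : V | a ∈ S u ∧ b ∈ S u}.ncard ≤ k)
    {b : N} (hb : b ≠ r) {P : Set V} (hP : ∀ u ∈ P, q b ∈ S u ∧ b ∈ S u)
    {M : Set (Sym2 V)} (hM : IsCrossMatching G (InsideSet q aa bb b ∪ P) M) :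
    M.ncard ≤ k := by
  classical
  have hkey : ∀ e ∈ M, ∃ x : V, x ∈ e ∧ q b ∈ S x ∧ b ∈ S x := by
    intro e he
    obtain ⟨u, v, rfl, huv, hu, hv⟩ := hM.1 e he
    rcases hu with hu | hu
    · -- u inside
      obtain ⟨s, hsu, hsv⟩ := hGadj huv
      by_cases hs : s ∈ PDesc q b
      · have hvI : v ∉ InsideSet q aa bb b := fun hvI => hv (Or.inl hvI)
        have hvend : aa v ∉ PDesc q b ∨ bb v ∉ PDesc q b := by
          by_contra hcon
          push_neg at hcon
          exact hvI ⟨hcon.1, hcon.2⟩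
        rcases hvend with hvend | hvend
        · obtain ⟨p, hp, hps⟩ := hsubpath v s hsv (aa v) (haa v)
          have hcross := crossing_walk h p hs hvend
          exact ⟨v, Sym2.mem_mk_right u v, hps _ hcross.2, hps _ hcross.1⟩
        · obtain ⟨p, hp, hps⟩ := hsubpath v s hsv (bb v) (hbb v)
          have hcross := crossing_walk h p hs hvend
          exact ⟨v, Sym2.mem_mk_right u v, hps _ hcross.2, hps _ hcross.1⟩
      · obtain ⟨p, hp, hps⟩ := hsubpath u (aa u) (haa u) s hsu
        have hcross := crossing_walk h p hu.1 hs
        exact ⟨u, Sym2.mem_mk_left u v, hps _ hcross.2, hps _ hcross.1⟩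
    · exact ⟨u, Sym2.mem_mk_left u v, (hP u hu).1, (hP u hu).2⟩
  rcases Set.eq_empty_or_nonempty M with rfl | hMne
  · simp
  · obtain ⟨e₀, he₀⟩ := hMne
    obtain ⟨x₀, -, -⟩ := hkey e₀ he₀
    have hg : ∀ e : Sym2 V, ∃ x : V, e ∈ M → (x ∈ e ∧ q b ∈ S x ∧ b ∈ S x) := by
      intro e
      by_cases he : e ∈ M
      · obtain ⟨x, hx⟩ := hkey e he
        exact ⟨x, fun _ => hx⟩
      · exact ⟨x₀, fun h' => absurd h' he⟩
    choose g hgspec using hg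
    have hmaps : ∀ e ∈ M, g e ∈ {u : V | q b ∈ S u ∧ b ∈ S u} := by
      intro e he
      exact ⟨(hgspec e he).2.1, (hgspec e he).2.2⟩
    have hinj : Set.InjOn g M := by
      intro e he e' he' hee
      by_contra hne
      exact hM.2 e he e' he' hne (g e) ⟨(hgspec e he).1, hee ▸ (hgspec e' he').1⟩
    have hTab : T.Adj (q b) b := by
      refine (h.hadj (q b) b).mpr ⟨q_ne_self h.hwf hb, Or.inr rfl⟩
    calc M.ncard ≤ ({u : V | q b ∈ S u ∧ b ∈ S u}).ncard :=
          Set.ncard_le_ncard_of_injOn g hmaps hinj (Set.toFinite _)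
      _ ≤ k := hcount hTab

lemma good_singleton {G : SimpleGraph V} {p : V} {M : Set (Sym2 V)}
    (hM : IsCrossMatching G {p} M) : M.ncard ≤ 1 := by
  classical
  have hsub : M.Subsingleton := by
    intro e he e' he'
    by_contra hne
    obtain ⟨u, v, rfl, -, hu, -⟩ := hM.1 e he
    obtain ⟨u', v', rfl, -, hu', -⟩ := hM.1 e' he'
    rw [Set.mem_singleton_iff] at hu hu'
    exact hM.2 _ he _ he' hne p
      ⟨hu ▸ Sym2.mem_mk_left u v, hu' ▸ Sym2.mem_mk_left u' v'⟩
  rcases hsub.eq_empty_or_singleton with rfl | ⟨e, rfl⟩ <;> simp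

lemma cross_compl {G : SimpleGraph V} {A : Set V} {M : Set (Sym2 V)}
    (hM : IsCrossMatching G Aᶜ M) : IsCrossMatching G A M := by
  constructor
  · intro e he
    obtain ⟨u, v, rfl, huv, hu, hv⟩ := hM.1 e he
    rw [Set.mem_compl_iff, not_not] at hv
    exact ⟨v, u, Sym2.eq_swap, huv.symm, hv, fun hu' => hu hu'⟩
  · exact hM.2

lemma inside_mono {b c : N} (hqc : q c = b) : InsideSet q aa bb c ⊆ InsideSet q aa bb b := by
  rintro u ⟨h1, h2⟩
  exact ⟨pdesc_trans h1 (pdesc_of_q_eq hqc), pdesc_trans h2 (pdesc_of_q_eq hqc)⟩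

lemma pc_subset_inside {b c : N} (hqc : q c = b) : PcSet aa bb b c ⊆ InsideSet q aa bb b := by
  rintro u (⟨h1, h2⟩ | ⟨h1, h2⟩)
  · exact ⟨by rw [h1]; exact mem_pdesc_self b, by rw [h2]; exact pdesc_of_q_eq hqc⟩
  · exact ⟨by rw [h2]; exact pdesc_of_q_eq hqc, by rw [h1]; exact mem_pdesc_self b⟩

lemma inside_cover (h : PTree T r q) (hTadjuv : ∀ u, T.Adj (aa u) (bb u))
    {b : N} (hb : b ≠ r) {u : V} (hu : u ∈ InsideSet q aa bb b) :
    ∃ c ∈ PChildren q b, u ∈ InsideSet q aa bb c ∪ PcSet aa bb b c := by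
  obtain ⟨h1, h2⟩ := hu
  obtain ⟨hne, hor⟩ := (h.hadj (aa u) (bb u)).mp (hTadjuv u)
  by_cases hab : aa u = b
  · have hbbne : bb u ≠ b := fun hh => hne (hab.trans hh.symm)
    have hqbb : q (bb u) = b := by
      rcases hor with hor | hor
      · exfalso
        rw [hab] at hor
        exact q_not_pdesc h.hq h.hwf hb (hor ▸ h2)
      · rw [hor, hab]
    exact ⟨bb u, ⟨hqbb, hbbne⟩, Or.inr (Or.inl ⟨hab, rfl⟩)⟩
  · by_cases hbb2 : bb u = b
    · have hqaa : q (aa u) = b := by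
        rcases hor with hor | hor
        · rw [hor, hbb2]
        · exfalso
          rw [hbb2] at hor
          exact q_not_pdesc h.hq h.hwf hb (hor ▸ h1)
      exact ⟨aa u, ⟨hqaa, hab⟩, Or.inr (Or.inr ⟨hbb2, rfl⟩)⟩
    · obtain ⟨c, hc1, hc2, hc3⟩ := exists_child_of_pdesc h1 hab
      refine ⟨c, ⟨hc1, hc2⟩, Or.inl ⟨hc3, ?_⟩⟩
      rcases hor with hor | hor
      · have haac : aa u ≠ c := by
          rintro rfl
          exact hbb2 (hor.symm.trans hc1)
        exact hor ▸ pdesc_step hc3 haac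
      · exact pdesc_of_q (hor.symm ▸ hc3)

lemma inside_disj (h : PTree T r q) {b : N} (hb : b ≠ r) {c c' : N}
    (hc : c ∈ PChildren q b) (hc' : c' ∈ PChildren q b) (hne : c ≠ c') {u : V}
    (h1 : u ∈ InsideSet q aa bb c ∪ PcSet aa bb b c)
    (h2 : u ∈ InsideSet q aa bb c' ∪ PcSet aa bb b c') : False := by
  have hcr : c ≠ r := by
    intro hh
    apply hc.2
    have hbr : b = r := by rw [← hc.1, hh, h.hq]
    rw [hh, hbr]
  have hcr' : c' ≠ r := by
    intro hh
    apply hc'.2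
    have hbr : b = r := by rw [← hc'.1, hh, h.hq]
    rw [hh, hbr]
  have hbnotc : b ∉ PDesc q c := hc.1 ▸ q_not_pdesc h.hq h.hwf hcr
  have hbnotc' : b ∉ PDesc q c' := hc'.1 ▸ q_not_pdesc h.hq h.hwf hcr'
  rcases h1 with hI | hPc <;> rcases h2 with hI' | hPc'
  · exact pdesc_child_disjoint h.hq h.hwf hc.1 hc.2 hc'.1 hc'.2 hne hI.1 hI'.1
  · rcases hPc' with ⟨e1, -⟩ | ⟨e1, -⟩
    · exact hbnotc (e1 ▸ hI.1)
    · exact hbnotc (e1 ▸ hI.2)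
  · rcases hPc with ⟨e1, -⟩ | ⟨e1, -⟩
    · exact hbnotc' (e1 ▸ hI'.1)
    · exact hbnotc' (e1 ▸ hI'.2)
  · rcases hPc with ⟨e1, e2⟩ | ⟨e1, e2⟩ <;> rcases hPc' with ⟨f1, f2⟩ | ⟨f1, f2⟩
    · exact hne ((e2.symm.trans f2))
    · exact hc'.2 (f2.symm.trans e1)
    · exact hc.2 (e2.symm.trans f1)
    · exact hne ((e2.symm.trans f2))

end
end MMW


open SimpleGraph
open scoped Classical

namespace MMW
variable {V N : Type}

lemma meas1 {a a' dd dd' p p' cK : ℕ} (hc : 1 ≤ cK) (ha : a' < a) (hdd' : dd' ≤ cK - 1)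
    (hp' : p' ≤ cK - 1) : a' * cK * cK + dd' * cK + p' < a * cK * cK + dd * cK + p := by
  have h1 : dd' * cK ≤ (cK - 1) * cK := Nat.mul_le_mul_right _ hdd'
  have h2 : (cK - 1) * cK + cK = cK * cK := by
    have h0 : (cK - 1) + 1 = cK := by omega
    calc (cK - 1) * cK + cK = ((cK - 1) + 1) * cK := by ring
      _ = cK * cK := by rw [h0]
  have h3 : a' * cK * cK + cK * cK ≤ a * cK * cK := by
    calc a' * cK * cK + cK * cK = (a' + 1) * (cK * cK) := by ring
      _ ≤ a * (cK * cK) := Nat.mul_le_mul_right _ ha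
      _ = a * cK * cK := by ring
  have e2 : dd' * cK + p' < (cK - 1) * cK + cK :=
    Nat.add_lt_add_of_le_of_lt h1 (by omega)
  have e3 : a' * cK * cK + (dd' * cK + p') < a' * cK * cK + ((cK - 1) * cK + cK) :=
    Nat.add_lt_add_left e2 _
  rw [h2] at e3
  have e4 : a' * cK * cK + (dd' * cK + p') < a * cK * cK := lt_of_lt_of_le e3 h3
  calc a' * cK * cK + dd' * cK + p' = a' * cK * cK + (dd' * cK + p') := by ring
    _ < a * cK * cK := e4
    _ ≤ a * cK * cK + dd * cK + p := by rw [add_assoc]; exact Nat.le_add_right _ _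

lemma meas2 {a dd p p' cK : ℕ} (hp : p' < p) :
    a * cK * cK + dd * cK + p' < a * cK * cK + dd * cK + p :=
  Nat.add_lt_add_left hp _

lemma meas3 {a d d' p' cK : ℕ} (hd : d' = d + 1) (hdc : d' ≤ cK) (hp' : p' < cK) :
    a * cK * cK + (cK - d') * cK + p' < a * cK * cK + (cK - d) * cK + 0 := by
  have h0 : cK - d = (cK - d') + 1 := by omega
  have h1 : (cK - d) * cK = (cK - d') * cK + cK := by
    rw [h0]; ring
  have h2 : (cK - d') * cK + p' < (cK - d') * cK + cK := Nat.add_lt_add_left hp' _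
  linarith

lemma child_ne_r {q : N → N} {r b c : N} (hc : c ∈ PChildren q b) (hq : q r = r) : c ≠ r := by
  intro hh
  apply hc.2
  have hbr : b = r := by rw [← hc.1, hh, hq]
  rw [hh, hbr]

lemma builder [Fintype V] [Fintype N] {G : SimpleGraph V} {T : SimpleGraph N} {S : V → Set N}
    {q : N → N} {r : N} {aa bb : V → N} {k : ℕ} (hk : 0 < k)
    (h : PTree T r q)
    (haa : ∀ u, aa u ∈ S u) (hbb : ∀ u, bb u ∈ S u) (hTadjuv : ∀ u, T.Adj (aa u) (bb u))
    (hsubpath : ∀ u, ∀ a ∈ S u, ∀ b ∈ S u,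
      ∃ p : T.Walk a b, p.IsPath ∧ ∀ c ∈ p.support, c ∈ S u)
    (hGadj : ∀ ⦃u v : V⦄, G.Adj u v → (S u ∩ S v).Nonempty)
    (hcount : ∀ ⦃a b : N⦄, T.Adj a b → {u : V | a ∈ S u ∧ b ∈ S u}.ncard ≤ k)
    (hdeg : ∀ x : N, (T.neighborSet x).ncard ≤ 3)
    (cK : ℕ) (hcK : cK = Fintype.card V + Fintype.card N + 2) :
    ∀ (n : ℕ) (b : N) (P : Set V), b ≠ r → (∀ u ∈ P, q b ∈ S u ∧ b ∈ S u) →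
      (InsideSet q aa bb b ∪ P).Nonempty →
      (InsideSet q aa bb b ∪ P).ncard * cK * cK + (cK - pdepth h.hwf b) * cK + P.ncard ≤ n →
      ∃ t : MBT V, t.labels.Nodup ∧ {g : V | g ∈ t.labels} = InsideSet q aa bb b ∪ P ∧
        ∀ x ∈ t.posL, ∀ M : Set (Sym2 V), IsCrossMatching G (t.cluster x) M → M.ncard ≤ k := by
  intro n
  induction n using Nat.strong_induction_on with
  | _ n ih =>
  intro b P hb hP hne hmeas
  have hc1 : 1 ≤ cK := by omega
  have hPlt : ∀ Q : Set V, Q.ncard ≤ cK - 1 := by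
    intro Q
    have h1 : Q.ncard ≤ Fintype.card V := by
      have := Set.ncard_le_ncard (Set.subset_univ Q) (Set.toFinite _)
      rwa [Set.ncard_univ, Nat.card_eq_fintype_card] at this
    omega
  have hdepth : ∀ x : N, pdepth h.hwf x ≤ cK - 1 := by
    intro x
    have := pdepth_lt_card h.hwf x
    omega
  have hdpos : 1 ≤ pdepth h.hwf b := pdepth_pos h.hwf hb
  by_cases h1 : ∃ p ∈ P, p ∈ InsideSet q aa bb b
  · obtain ⟨p, hpP, hpI⟩ := h1
    have hAeq : InsideSet q aa bb b ∪ (P \ {p}) = InsideSet q aa bb b ∪ P := by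
      ext u
      by_cases hup : u = p
      · subst hup
        simp [hpI, hpP]
      · simp [hup]
    have hmeas' : (InsideSet q aa bb b ∪ (P \ {p})).ncard * cK * cK
        + (cK - pdepth h.hwf b) * cK + (P \ {p}).ncard < n := by
      calc (InsideSet q aa bb b ∪ (P \ {p})).ncard * cK * cK
          + (cK - pdepth h.hwf b) * cK + (P \ {p}).ncard
          < (InsideSet q aa bb b ∪ P).ncard * cK * cK
            + (cK - pdepth h.hwf b) * cK + P.ncard := by
            rw [hAeq]
            exact meas2 (Set.ncard_diff_singleton_lt_of_mem hpP (Set.toFinite _))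
        _ ≤ n := hmeas
    obtain ⟨t, ht1, ht2, ht3⟩ := ih _ hmeas' b (P \ {p}) hb (fun u hu => hP u hu.1)
      (by rw [hAeq]; exact hne) le_rfl
    exact ⟨t, ht1, by rw [ht2, hAeq], ht3⟩
  · push_neg at h1
    by_cases h2 : P.Nonempty
    · obtain ⟨p, hp⟩ := h2
      by_cases h3 : InsideSet q aa bb b ∪ P ⊆ {p}
      · have hApf : InsideSet q aa bb b ∪ P = {p} :=
          Set.Subset.antisymm h3 (by rintro x rfl; exact Or.inr hp)
        refine ⟨MBT.lf p, by simp [MBT.labels, MBT.leafPos], ?_, ?_⟩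
        · rw [hApf]
          ext g
          simp [MBT.labels, MBT.leafPos]
        · intro x hx M hM
          have hx0 : x = [] := by simpa [MBT.posL] using hx
          subst hx0
          have hcl : (MBT.lf p).cluster [] = {p} := by
            rw [MBT.cluster_nil]
            ext g
            simp [MBT.labels, MBT.leafPos]
          rw [hcl] at hM
          exact le_trans (good_singleton hM) hk
      · obtain ⟨w, hwA, hwp⟩ := Set.not_subset.mp h3
        have hpA : p ∈ InsideSet q aa bb b ∪ P := Or.inr hp
        have hAlt : InsideSet q aa bb b ∪ (P \ {p})
            = (InsideSet q aa bb b ∪ P) \ {p} := by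
          ext u
          constructor
          · rintro (hu | hu)
            · exact ⟨Or.inl hu, fun he => h1 p hp (by rw [Set.mem_singleton_iff] at he; rw [← he]; exact hu)⟩
            · exact ⟨Or.inr hu.1, hu.2⟩
          · rintro ⟨hu | hu, hne2⟩
            · exact Or.inl hu
            · exact Or.inr ⟨hu, hne2⟩
        have hmeas' : (InsideSet q aa bb b ∪ (P \ {p})).ncard * cK * cK
            + (cK - pdepth h.hwf b) * cK + (P \ {p}).ncard < n := by
          have hlt : (InsideSet q aa bb b ∪ (P \ {p})).ncard
              < (InsideSet q aa bb b ∪ P).ncard := by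
            rw [hAlt]
            exact Set.ncard_diff_singleton_lt_of_mem hpA (Set.toFinite _)
          calc (InsideSet q aa bb b ∪ (P \ {p})).ncard * cK * cK
              + (cK - pdepth h.hwf b) * cK + (P \ {p}).ncard
              < (InsideSet q aa bb b ∪ P).ncard * cK * cK
                + (cK - pdepth h.hwf b) * cK + P.ncard :=
                meas1 hc1 hlt (by omega) (by
                  have := hPlt (P \ {p})
                  omega)
            _ ≤ n := hmeas
        have hne' : (InsideSet q aa bb b ∪ (P \ {p})).Nonempty := by
          rw [hAlt]
          exact ⟨w, hwA, hwp⟩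
        obtain ⟨t₂, ht1, ht2, ht3⟩ := ih _ hmeas' b (P \ {p}) hb (fun u hu => hP u hu.1)
          hne' le_rfl
        have hplab : p ∉ t₂.labels := by
          intro hmem
          have : p ∈ (InsideSet q aa bb b ∪ P) \ {p} := by
            rw [← hAlt, ← ht2]; exact hmem
          exact this.2 rfl
        refine ⟨MBT.nd (MBT.lf p) t₂, ?_, ?_, ?_⟩
        · rw [MBT.labels_nd, List.nodup_append]
          refine ⟨by simp [MBT.labels, MBT.leafPos], ht1, ?_⟩
          intro a ha b hat hab
          subst hab
          rw [MBT.labels_lf, List.mem_singleton] at ha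
          exact hplab (ha ▸ hat)
        · ext g
          rw [Set.mem_setOf_eq, MBT.labels_nd, List.mem_append, MBT.labels_lf,
            List.mem_singleton]
          constructor
          · rintro (rfl | hg)
            · exact hpA
            · have : g ∈ (InsideSet q aa bb b ∪ P) \ {p} := by rw [← hAlt, ← ht2]; exact hg
              exact this.1
          · intro hg
            by_cases hgp : g = p
            · exact Or.inl hgp
            · refine Or.inr ?_
              have : g ∈ {g : V | g ∈ t₂.labels} := by
                rw [ht2, hAlt]
                exact ⟨hg, hgp⟩
              exact this
        · intro x hx M hM
          rcases MBT.mem_posL_nd.mp hx with rfl | ⟨y, hy, rfl⟩ | ⟨y, hy, rfl⟩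
          · rw [MBT.cluster_nil] at hM
            have hseteq : {g : V | g ∈ (MBT.nd (MBT.lf p) t₂).labels}
                = InsideSet q aa bb b ∪ P := by
              ext g
              rw [Set.mem_setOf_eq, MBT.labels_nd, List.mem_append, MBT.labels_lf,
                List.mem_singleton]
              constructor
              · rintro (rfl | hg)
                · exact hpA
                · have : g ∈ (InsideSet q aa bb b ∪ P) \ {p} := by
                    rw [← hAlt, ← ht2]; exact hg
                  exact this.1
              · intro hg
                by_cases hgp : g = p
                · exact Or.inl hgp
                · refine Or.inr ?_
                  have : g ∈ {g : V | g ∈ t₂.labels} := by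
                    rw [ht2, hAlt]
                    exact ⟨hg, hgp⟩
                  exact this
            rw [hseteq] at hM
            exact good_of_form h haa hbb hsubpath hGadj hcount hb hP hM
          · rw [MBT.cluster_false] at hM
            have hy0 : y = [] := by simpa [MBT.posL] using hy
            subst hy0
            have hcl : (MBT.lf p).cluster [] = {p} := by
              rw [MBT.cluster_nil]
              ext g
              simp [MBT.labels, MBT.leafPos]
            rw [hcl] at hM
            exact le_trans (good_singleton hM) hk
          · rw [MBT.cluster_true] at hM
            exact ht3 y hy M hM
    · have hPe : P = ∅ := Set.not_nonempty_iff_eq_empty.mp h2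
      have hA' : InsideSet q aa bb b ∪ P = InsideSet q aa bb b := by
        rw [hPe, Set.union_empty]
      have hPcard0 : P.ncard = 0 := by rw [hPe]; simp
      -- helper for the single-child case
      have hsingle : ∀ c₀ ∈ PChildren q b,
          InsideSet q aa bb b ∪ P = InsideSet q aa bb c₀ ∪ PcSet aa bb b c₀ →
          ∃ t : MBT V, t.labels.Nodup ∧
            {g : V | g ∈ t.labels} = InsideSet q aa bb b ∪ P ∧
            ∀ x ∈ t.posL, ∀ M : Set (Sym2 V),
              IsCrossMatching G (t.cluster x) M → M.ncard ≤ k := by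
        intro c₀ hc₀ hAeq
        have hc₀r : c₀ ≠ r := child_ne_r hc₀ h.hq
        have hdc₀ : pdepth h.hwf c₀ = pdepth h.hwf b + 1 := by
          have := pdepth_q_eq h.hwf hc₀r
          rw [hc₀.1] at this
          exact this
        have hP' : ∀ u ∈ PcSet aa bb b c₀, q c₀ ∈ S u ∧ c₀ ∈ S u := by
          rintro u (⟨e1, e2⟩ | ⟨e1, e2⟩)
          · exact ⟨by rw [hc₀.1, ← e1]; exact haa u, by rw [← e2]; exact hbb u⟩
          · exact ⟨by rw [hc₀.1, ← e1]; exact hbb u, by rw [← e2]; exact haa u⟩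
        have hmeas' : (InsideSet q aa bb c₀ ∪ PcSet aa bb b c₀).ncard * cK * cK
            + (cK - pdepth h.hwf c₀) * cK + (PcSet aa bb b c₀).ncard < n := by
          calc (InsideSet q aa bb c₀ ∪ PcSet aa bb b c₀).ncard * cK * cK
              + (cK - pdepth h.hwf c₀) * cK + (PcSet aa bb b c₀).ncard
              < (InsideSet q aa bb c₀ ∪ PcSet aa bb b c₀).ncard * cK * cK
                + (cK - pdepth h.hwf b) * cK + 0 := by
                refine meas3 hdc₀ (by have := hdepth c₀; omega) ?_
                have := hPlt (PcSet aa bb b c₀)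
                omega
            _ = (InsideSet q aa bb b ∪ P).ncard * cK * cK
                + (cK - pdepth h.hwf b) * cK + 0 := by rw [hAeq]
            _ ≤ n := by omega
        obtain ⟨t, ht1, ht2, ht3⟩ := ih _ hmeas' c₀ (PcSet aa bb b c₀) hc₀r hP'
          (by rw [← hAeq]; exact hne) le_rfl
        exact ⟨t, ht1, by rw [ht2, hAeq], ht3⟩
      -- now analyse children of b
      have hbne : (InsideSet q aa bb b).Nonempty := by rw [← hA']; exact hne
      obtain ⟨u₁, hu₁⟩ := hbne
      obtain ⟨c₁, hc₁, -⟩ := inside_cover h hTadjuv hb hu₁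
      have hchpos : 0 < (PChildren q b).ncard :=
        (Set.ncard_pos (Set.toFinite _)).mpr ⟨c₁, hc₁⟩
      have hchle : (PChildren q b).ncard ≤ 2 := by
        have hh1 := children_ncard_lt h hb
        have hh2 := hdeg b
        omega
      rcases (by omega : (PChildren q b).ncard = 1 ∨ (PChildren q b).ncard = 2) with hcard | hcard
      · obtain ⟨c, hcset⟩ := Set.ncard_eq_one.mp hcard
        have hcmem : c ∈ PChildren q b := by rw [hcset]; rfl
        apply hsingle c hcmem
        rw [hA']
        apply Set.Subset.antisymm
        · intro u hu
          obtain ⟨c', hc', hu'⟩ := inside_cover h hTadjuv hb hu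
          rw [hcset, Set.mem_singleton_iff] at hc'
          rw [← hc']
          exact hu'
        · rintro u (hu | hu)
          · exact inside_mono hcmem.1 hu
          · exact pc_subset_inside hcmem.1 hu
      · obtain ⟨c, c', hnecc, hcset⟩ := Set.ncard_eq_two.mp hcard
        have hcmem : c ∈ PChildren q b := by rw [hcset]; exact Or.inl rfl
        have hc'mem : c' ∈ PChildren q b := by rw [hcset]; exact Or.inr rfl
        set A₁ := InsideSet q aa bb c ∪ PcSet aa bb b c with hA₁
        set A₂ := InsideSet q aa bb c' ∪ PcSet aa bb b c' with hA₂
        have hcover : InsideSet q aa bb b = A₁ ∪ A₂ := by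
          apply Set.Subset.antisymm
          · intro u hu
            obtain ⟨c'', hc'', hu'⟩ := inside_cover h hTadjuv hb hu
            rw [hcset] at hc''
            rcases hc'' with rfl | rfl
            · exact Or.inl hu'
            · exact Or.inr hu'
          · rintro u (hu | hu)
            · rcases hu with hu | hu
              · exact inside_mono hcmem.1 hu
              · exact pc_subset_inside hcmem.1 hu
            · rcases hu with hu | hu
              · exact inside_mono hc'mem.1 hu
              · exact pc_subset_inside hc'mem.1 hu
        have hdisj : ∀ u, u ∈ A₁ → u ∈ A₂ → False := fun u h1' h2' =>
          inside_disj h hb hcmem hc'mem hnecc h1' h2'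
        by_cases hA1e : A₁ = ∅
        · apply hsingle c' hc'mem
          rw [hA', hcover, hA1e, Set.empty_union]
        · by_cases hA2e : A₂ = ∅
          · apply hsingle c hcmem
            rw [hA', hcover, hA2e, Set.union_empty]
          · obtain ⟨w₁, hw₁⟩ := Set.nonempty_iff_ne_empty.mpr hA1e
            obtain ⟨w₂, hw₂⟩ := Set.nonempty_iff_ne_empty.mpr hA2e
            have hsub1 : A₁ ⊂ InsideSet q aa bb b := by
              constructor
              · rw [hcover]; exact Set.subset_union_left
              · intro hcon
                exact hdisj w₂ (hcon (by rw [hcover]; exact Or.inr hw₂)) hw₂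
            have hsub2 : A₂ ⊂ InsideSet q aa bb b := by
              constructor
              · rw [hcover]; exact Set.subset_union_right
              · intro hcon
                exact hdisj w₁ hw₁ (hcon (by rw [hcover]; exact Or.inl hw₁))
            have hlt1 := Set.ncard_lt_ncard hsub1 (Set.toFinite _)
            have hlt2 := Set.ncard_lt_ncard hsub2 (Set.toFinite _)
            have hcr : c ≠ r := child_ne_r hcmem h.hq
            have hc'r : c' ≠ r := child_ne_r hc'mem h.hq
            have hdc : pdepth h.hwf c = pdepth h.hwf b + 1 := by
              have := pdepth_q_eq h.hwf hcr
              rw [hcmem.1] at this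
              exact this
            have hdc' : pdepth h.hwf c' = pdepth h.hwf b + 1 := by
              have := pdepth_q_eq h.hwf hc'r
              rw [hc'mem.1] at this
              exact this
            have hP1 : ∀ u ∈ PcSet aa bb b c, q c ∈ S u ∧ c ∈ S u := by
              rintro u (⟨e1, e2⟩ | ⟨e1, e2⟩)
              · exact ⟨by rw [hcmem.1, ← e1]; exact haa u, by rw [← e2]; exact hbb u⟩
              · exact ⟨by rw [hcmem.1, ← e1]; exact hbb u, by rw [← e2]; exact haa u⟩
            have hP2 : ∀ u ∈ PcSet aa bb b c', q c' ∈ S u ∧ c' ∈ S u := by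
              rintro u (⟨e1, e2⟩ | ⟨e1, e2⟩)
              · exact ⟨by rw [hc'mem.1, ← e1]; exact haa u, by rw [← e2]; exact hbb u⟩
              · exact ⟨by rw [hc'mem.1, ← e1]; exact hbb u, by rw [← e2]; exact haa u⟩
            have hAcard : (InsideSet q aa bb b ∪ P).ncard = (InsideSet q aa bb b).ncard := by
              rw [hA']
            have hmeas1 : A₁.ncard * cK * cK + (cK - pdepth h.hwf c) * cK
                + (PcSet aa bb b c).ncard < n := by
              calc A₁.ncard * cK * cK + (cK - pdepth h.hwf c) * cK + (PcSet aa bb b c).ncard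
                  < (InsideSet q aa bb b).ncard * cK * cK
                    + (cK - pdepth h.hwf b) * cK + P.ncard :=
                    meas1 hc1 hlt1 (by have := hdepth c; omega)
                      (by have := hPlt (PcSet aa bb b c); omega)
                _ = (InsideSet q aa bb b ∪ P).ncard * cK * cK
                    + (cK - pdepth h.hwf b) * cK + P.ncard := by rw [hAcard]
                _ ≤ n := hmeas
            have hmeas2 : A₂.ncard * cK * cK + (cK - pdepth h.hwf c') * cK
                + (PcSet aa bb b c').ncard < n := by
              calc A₂.ncard * cK * cK + (cK - pdepth h.hwf c') * cK + (PcSet aa bb b c').ncard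
                  < (InsideSet q aa bb b).ncard * cK * cK
                    + (cK - pdepth h.hwf b) * cK + P.ncard :=
                    meas1 hc1 hlt2 (by have := hdepth c'; omega)
                      (by have := hPlt (PcSet aa bb b c'); omega)
                _ = (InsideSet q aa bb b ∪ P).ncard * cK * cK
                    + (cK - pdepth h.hwf b) * cK + P.ncard := by rw [hAcard]
                _ ≤ n := hmeas
            obtain ⟨t₁, ht₁1, ht₁2, ht₁3⟩ := ih _ hmeas1 c (PcSet aa bb b c) hcr hP1
              ⟨w₁, hw₁⟩ le_rfl
            obtain ⟨t₂, ht₂1, ht₂2, ht₂3⟩ := ih _ hmeas2 c' (PcSet aa bb b c') hc'r hP2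
              ⟨w₂, hw₂⟩ le_rfl
            rw [← hA₁] at ht₁2
            rw [← hA₂] at ht₂2
            refine ⟨MBT.nd t₁ t₂, ?_, ?_, ?_⟩
            · rw [MBT.labels_nd, List.nodup_append]
              refine ⟨ht₁1, ht₂1, ?_⟩
              intro a ha1 b ha2 hab
              subst hab
              have hm1 : a ∈ A₁ := by rw [← ht₁2]; exact ha1
              have hm2 : a ∈ A₂ := by rw [← ht₂2]; exact ha2
              exact hdisj a hm1 hm2
            · ext g
              rw [Set.mem_setOf_eq, MBT.labels_nd, List.mem_append, hA', hcover]
              constructor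
              · rintro (hg | hg)
                · exact Or.inl (by rw [← ht₁2]; exact hg)
                · exact Or.inr (by rw [← ht₂2]; exact hg)
              · rintro (hg | hg)
                · exact Or.inl (by rw [← ht₁2] at hg; exact hg)
                · exact Or.inr (by rw [← ht₂2] at hg; exact hg)
            · intro x hx M hM
              rcases MBT.mem_posL_nd.mp hx with rfl | ⟨y, hy, rfl⟩ | ⟨y, hy, rfl⟩
              · rw [MBT.cluster_nil] at hM
                have hseteq : {g : V | g ∈ (MBT.nd t₁ t₂).labels}
                    = InsideSet q aa bb b ∪ P := by
                  ext g
                  rw [Set.mem_setOf_eq, MBT.labels_nd, List.mem_append, hA', hcover]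
                  constructor
                  · rintro (hg | hg)
                    · exact Or.inl (by rw [← ht₁2]; exact hg)
                    · exact Or.inr (by rw [← ht₂2]; exact hg)
                  · rintro (hg | hg)
                    · exact Or.inl (by rw [← ht₁2] at hg; exact hg)
                    · exact Or.inr (by rw [← ht₂2] at hg; exact hg)
                rw [hseteq] at hM
                exact good_of_form h haa hbb hsubpath hGadj hcount hb hP hM
              · rw [MBT.cluster_false] at hM
                exact ht₁3 y hy M hM
              · rw [MBT.cluster_true] at hM
                exact ht₂3 y hy M hM

end MMW


open SimpleGraph
open scoped Classical
open MMW

/-- If `G` has an edge, `k ≥ 1`, and there is a tree `T` of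
maximum degree at most 3 and a nontrivial subtree `T_u` of `T` for each vertex
`u` of `G` such that (i) if `uv ∈ E(G)` then `T_u` and `T_v` share a vertex of
`T`, and (ii) each edge of `T` belongs to at most `k` of the subtrees, then
`mmw(G) ≤ k`. -/
theorem mmw_le_of_subtrees {V : Type} [Fintype V] (G : SimpleGraph V)
    (hE : G.edgeSet.Nonempty) (k : ℕ) (hk : 0 < k)
    (N : Type) [Fintype N] (T : SimpleGraph N) (hT : T.IsTree)
    (hdeg : ∀ x : N, (T.neighborSet x).ncard ≤ 3)
    (S : V → Set N)
    (hsub : ∀ u : V, IsNontrivialSubtree T (S u))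
    (hadj : ∀ ⦃u v : V⦄, G.Adj u v → (S u ∩ S v).Nonempty)
    (hcount : ∀ ⦃a b : N⦄, T.Adj a b → {u : V | a ∈ S u ∧ b ∈ S u}.ncard ≤ k) :
    mmw G ≤ k := by
  classical
  obtain ⟨u₀, v₀, hGuv⟩ : ∃ u v : V, G.Adj u v := by
    obtain ⟨e, he⟩ := hE
    induction e using Sym2.ind with
    | _ u v => exact ⟨u, v, he⟩
  choose aa haa bb hbb hTadjuv using fun u => (hsub u).2
  have hsubpath : ∀ u : V, ∀ a ∈ S u, ∀ b ∈ S u,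
      ∃ p : T.Walk a b, p.IsPath ∧ ∀ c ∈ p.support, c ∈ S u := fun u => (hsub u).1.2
  obtain ⟨hNne, hU⟩ := (isTree_iff_existsUnique_path).mp hT
  obtain ⟨r₁⟩ := hNne
  have pt₁ := tparent_ptree hU r₁
  obtain ⟨m, -, hmax⟩ := Finset.exists_max_image (Finset.univ : Finset N)
    (pdepth pt₁.hwf) ⟨r₁, Finset.mem_univ _⟩
  have hmne : m ≠ r₁ := by
    intro h0
    have hz : ∀ x : N, pdepth pt₁.hwf x = 0 := by
      intro x
      have h1 := hmax x (Finset.mem_univ x)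
      rw [h0, pdepth_r] at h1
      omega
    have hall : ∀ x : N, x = r₁ := by
      intro x
      have h1 := iterate_pdepth pt₁.hwf x
      rw [hz] at h1
      exact h1
    exact (hTadjuv u₀).ne (by rw [hall (aa u₀), hall (bb u₀)])
  have hnbrm : T.neighborSet m = {tparent hU r₁ m} := by
    apply nbr_eq_parent pt₁ hmne
    rw [Set.eq_empty_iff_forall_notMem]
    intro c hc
    have hcr : c ≠ r₁ := by
      intro h0
      apply hmne
      have h1 := hc.1
      rw [h0, pt₁.hq] at h1
      exact h1.symm
    have h1 := pdepth_q_eq pt₁.hwf hcr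
    rw [hc.1] at h1
    have h2 := hmax c (Finset.mem_univ c)
    omega
  have pt := tparent_ptree hU m
  set q := tparent hU m with hqdef
  set c₀ := tparent hU r₁ m with hc₀def
  have hc₀adj : T.Adj m c₀ := by
    have : c₀ ∈ T.neighborSet m := by rw [hnbrm]; rfl
    exact this
  have hc₀m : c₀ ≠ m := hc₀adj.ne'
  have hqc₀ : q c₀ = m := by
    rcases (pt.hadj m c₀).mp hc₀adj with ⟨hne0, h0 | h0⟩
    · exfalso
      rw [pt.hq] at h0
      exact hne0 h0
    · exact h0
  have hchm : ∀ c, c ∈ PChildren q m → c = c₀ := by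
    intro c hc
    have h1 : c ∈ T.neighborSet m := children_mem_nbr pt hc
    rw [hnbrm, Set.mem_singleton_iff] at h1
    exact h1
  have hdesc : ∀ x : N, x ≠ m → x ∈ PDesc q c₀ := by
    intro x hx
    obtain ⟨c, hc1, hc2, hc3⟩ := exists_child_of_pdesc
      (⟨pdepth pt.hwf x, iterate_pdepth pt.hwf x⟩ : x ∈ PDesc q m) hx
    rwa [hchm c ⟨hc1, hc2⟩] at hc3
  set P₀ : Set V := {u | ¬ (aa u ∈ PDesc q c₀ ∧ bb u ∈ PDesc q c₀)} with hP₀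
  have hP₀Fib : ∀ u ∈ P₀, q c₀ ∈ S u ∧ c₀ ∈ S u := by
    intro u hu
    rw [hqc₀]
    have hend : aa u = m ∨ bb u = m := by
      by_contra hcon
      push_neg at hcon
      exact hu ⟨hdesc _ hcon.1, hdesc _ hcon.2⟩
    rcases hend with he | he
    · have h1 : bb u ∈ T.neighborSet m := by
        have h2 := hTadjuv u
        rw [he] at h2
        exact h2
      rw [hnbrm, Set.mem_singleton_iff] at h1
      exact ⟨by rw [← he]; exact haa u, by rw [← h1]; exact hbb u⟩
    · have h1 : aa u ∈ T.neighborSet m := by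
        have h2 := (hTadjuv u).symm
        rw [he] at h2
        exact h2
      rw [hnbrm, Set.mem_singleton_iff] at h1
      exact ⟨by rw [← he]; exact hbb u, by rw [← h1]; exact haa u⟩
  have hcover₀ : InsideSet q aa bb c₀ ∪ P₀ = Set.univ := by
    ext u
    simp only [Set.mem_univ, iff_true]
    by_cases hu : aa u ∈ PDesc q c₀ ∧ bb u ∈ PDesc q c₀
    · exact Or.inl hu
    · exact Or.inr hu
  have hne₀ : (InsideSet q aa bb c₀ ∪ P₀).Nonempty := by
    rw [hcover₀]
    exact ⟨u₀, trivial⟩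
  obtain ⟨t, ht1, ht2, ht3⟩ := builder hk pt haa hbb hTadjuv hsubpath hadj hcount hdeg
    (Fintype.card V + Fintype.card N + 2) rfl
    ((InsideSet q aa bb c₀ ∪ P₀).ncard * (Fintype.card V + Fintype.card N + 2)
        * (Fintype.card V + Fintype.card N + 2)
      + ((Fintype.card V + Fintype.card N + 2) - pdepth pt.hwf c₀)
        * (Fintype.card V + Fintype.card N + 2) + P₀.ncard)
    c₀ P₀ hc₀m hP₀Fib hne₀ le_rfl
  rw [hcover₀] at ht2
  obtain ⟨t₁, t₂, rfl⟩ : ∃ t₁ t₂, t = MBT.nd t₁ t₂ := by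
    cases t with
    | lf v =>
      exfalso
      have h1 : u₀ ∈ {g : V | g ∈ (MBT.lf v).labels} := by rw [ht2]; trivial
      have h2 : v₀ ∈ {g : V | g ∈ (MBT.lf v).labels} := by rw [ht2]; trivial
      simp only [Set.mem_setOf_eq, MBT.labels, MBT.leafPos, List.map,
        List.mem_singleton] at h1 h2
      exact hGuv.ne (h1.trans h2.symm)
    | nd t₁ t₂ => exact ⟨t₁, t₂, rfl⟩
  have huniv : ∀ g : V, g ∈ (MBT.nd t₁ t₂).labels := by
    intro g
    have hg : g ∈ {g : V | g ∈ (MBT.nd t₁ t₂).labels} := by rw [ht2]; trivial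
    exact hg
  have hbij := MBT.lmap_bij t₁ t₂ ht1 huniv
  set E := Equiv.ofBijective _ hbij with hEdef
  have hpair : ∀ g : V, (((E.symm g : {x : (MBT.nd t₁ t₂).posT //
      ((MBT.pgraph (MBT.nd t₁ t₂)).neighborSet x).ncard = 1}) :
      (MBT.nd t₁ t₂).posT).1, g) ∈ (MBT.nd t₁ t₂).leafPos := by
    intro g
    have h1 := MBT.lmap_spec t₁ t₂ (E.symm g)
    have h2 : MBT.lmap t₁ t₂ (E.symm g) = g := by
      have h3 : E (E.symm g) = g := Equiv.apply_symm_apply E g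
      rw [hEdef] at h3
      exact h3
    rw [h2] at h1
    exact h1
  have hposu : ∀ (g : V) (y : List Bool), (y, g) ∈ (MBT.nd t₁ t₂).leafPos →
      y = ((E.symm g : {x : (MBT.nd t₁ t₂).posT //
        ((MBT.pgraph (MBT.nd t₁ t₂)).neighborSet x).ncard = 1}) :
        (MBT.nd t₁ t₂).posT).1 := by
    intro g y hy
    have h2 := hpair g
    have h3 := List.inj_on_of_nodup_map (f := Prod.snd) ht1 hy h2 rfl
    exact congrArg Prod.fst h3
  have hclmem : ∀ (g : V) (z : List Bool), g ∈ (MBT.nd t₁ t₂).cluster z ↔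
      z <:+ ((E.symm g : {x : (MBT.nd t₁ t₂).posT //
        ((MBT.pgraph (MBT.nd t₁ t₂)).neighborSet x).ncard = 1}) :
        (MBT.nd t₁ t₂).posT).1 := by
    intro g z
    constructor
    · rintro ⟨y, hy, hsuf⟩
      rwa [hposu g y hy] at hsuf
    · intro hsuf
      exact ⟨_, hpair g, hsuf⟩
  have hval : ∀ A : Set V, (∀ M, IsCrossMatching G A M → M.ncard ≤ k) → mmValue G A ≤ k := by
    intro A hA
    apply csSup_le'
    rintro n ⟨M, hM, rfl⟩
    exact hA M hM
  apply Nat.sInf_le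
  refine ⟨(MBT.nd t₁ t₂).posT, inferInstance,
    ⟨MBT.pgraph _, ptree_isTree (MBT.ptree_pgraph _), MBT.pgraph_deg_le _, E⟩, ?_⟩
  intro a b hab
  rcases MBT.pgraph_adj_cases _ hab with ⟨hbroot, hqb⟩ | ⟨haroot, hqa⟩
  · -- b is the child: side a b is the complement of cluster b.1
    apply hval
    intro M hM
    have hside : (BranchDecomp.mk (MBT.pgraph (MBT.nd t₁ t₂))
        (ptree_isTree (MBT.ptree_pgraph _)) (MBT.pgraph_deg_le _) E).side a b
        = ((MBT.nd t₁ t₂).cluster b.1)ᶜ := by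
      ext g
      have hiff := MBT.side_spec' (MBT.nd t₁ t₂) hbroot
        ((E.symm g : {x : (MBT.nd t₁ t₂).posT //
          ((MBT.pgraph (MBT.nd t₁ t₂)).neighborSet x).ncard = 1}) : (MBT.nd t₁ t₂).posT)
      rw [hqb] at hiff
      have h4 : g ∈ (BranchDecomp.mk (MBT.pgraph (MBT.nd t₁ t₂))
          (ptree_isTree (MBT.ptree_pgraph _)) (MBT.pgraph_deg_le _) E).side a b ↔
          ((E.symm g : {x : (MBT.nd t₁ t₂).posT //
            ((MBT.pgraph (MBT.nd t₁ t₂)).neighborSet x).ncard = 1}) :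
            (MBT.nd t₁ t₂).posT) ∉ PDesc (MBT.pq (MBT.nd t₁ t₂)) b := hiff
      rw [h4, Set.mem_compl_iff, hclmem g b.1, ← MBT.pdesc_iff_suffix]
    rw [hside] at hM
    exact ht3 b.1 b.2 M (cross_compl hM)
  · -- a is the child: side a b is cluster a.1
    apply hval
    intro M hM
    have hside : (BranchDecomp.mk (MBT.pgraph (MBT.nd t₁ t₂))
        (ptree_isTree (MBT.ptree_pgraph _)) (MBT.pgraph_deg_le _) E).side a b
        = (MBT.nd t₁ t₂).cluster a.1 := by
      ext g
      have hiff := MBT.side_spec (MBT.nd t₁ t₂) haroot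
        ((E.symm g : {x : (MBT.nd t₁ t₂).posT //
          ((MBT.pgraph (MBT.nd t₁ t₂)).neighborSet x).ncard = 1}) : (MBT.nd t₁ t₂).posT)
      rw [hqa] at hiff
      have h4 : g ∈ (BranchDecomp.mk (MBT.pgraph (MBT.nd t₁ t₂))
          (ptree_isTree (MBT.ptree_pgraph _)) (MBT.pgraph_deg_le _) E).side a b ↔
          ((E.symm g : {x : (MBT.nd t₁ t₂).posT //
            ((MBT.pgraph (MBT.nd t₁ t₂)).neighborSet x).ncard = 1}) :
            (MBT.nd t₁ t₂).posT) ∈ PDesc (MBT.pq (MBT.nd t₁ t₂)) a := hiff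
      rw [h4, hclmem g a.1, ← MBT.pdesc_iff_suffix]
    rw [hside] at hM
    exact ht3 a.1 a.2 M hM
end
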